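/- arXiv:2504.07324 — 5 statements merged into one kernel-verified Lean document; each statement's English description precedes it below -/
import Mathlib

section
/- Let d, p be positive integers, let K : ℝ^d × ℝ^p → ℝ be twice continuously differentiable (jointly), let x ∈ ℝ^d, and let t̂ : ℝ^p → ℝ^d be continuously differentiable on an open set U ⊆ ℝ^p and satisfy the saddlepoint equation ∇ₜK(t̂(θ), θ) = x for all θ ∈ U, with K''(t̂(θ), θ) invertible for all θ ∈ U. Then for every θ ∈ U, the p×p Hessian matrix at θ of the map θ ↦ K(t̂(θ), θ) − ⟨t̂(θ), x⟩ equals H_θ(t̂(θ), θ) − J(t̂(θ), θ)ᵀ · K''(t̂(θ), θ)⁻¹ · J(t̂(θ), θ), where H_θ(t, θ) is the p×p Hessian of K in its second argument at fixed first argument and J(t, θ) is the d×p matrix of mixed partials ∂²K/∂θ_j∂t_i. -/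
open Matrix

section stmt3helpers
open ContinuousLinearMap


variable {E F W : Type*} [NormedAddCommGroup E] [NormedSpace ℝ E]
  [NormedAddCommGroup F] [NormedSpace ℝ F]
  [NormedAddCommGroup W] [NormedSpace ℝ W]

lemma partial_fst (K : E × F → ℝ) (h : Differentiable ℝ K) (a : E) (b : F) (v : E) :
    fderiv ℝ (fun t => K (t, b)) a v = fderiv ℝ K (a, b) (v, 0) := by
  have : HasFDerivAt (fun t => K (t, b)) ((fderiv ℝ K (a, b)).comp (inl ℝ E F)) a :=
    (h (a, b)).hasFDerivAt.comp a (hasFDerivAt_prodMk_left a b)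
  rw [this.fderiv]; rfl

lemma partial_snd (K : E × F → ℝ) (h : Differentiable ℝ K) (a : E) (b : F) (v : F) :
    fderiv ℝ (fun s => K (a, s)) b v = fderiv ℝ K (a, b) (0, v) := by
  have : HasFDerivAt (fun s => K (a, s)) ((fderiv ℝ K (a, b)).comp (inr ℝ E F)) b :=
    (h (a, b)).hasFDerivAt.comp b (hasFDerivAt_prodMk_right a b)
  rw [this.fderiv]; rfl

lemma eval_deriv (K : E × F → ℝ) (hK : ContDiff ℝ 2 K)
    {G : W → E × F} {G' : W →L[ℝ] E × F} {w : W} (hG : HasFDerivAt G G' w)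
    (c : E × F) (v : W) :
    fderiv ℝ (fun y => fderiv ℝ K (G y) c) w v
      = fderiv ℝ (fderiv ℝ K) (G w) (G' v) c := by
  have h2 : ContDiff ℝ 1 (fderiv ℝ K) := hK.fderiv_right (by norm_num)
  have h3 : HasFDerivAt (fderiv ℝ K) (fderiv ℝ (fderiv ℝ K) (G w)) (G w) :=
    (h2.differentiable one_ne_zero (G w)).hasFDerivAt
  have h4 : HasFDerivAt (fun y => fderiv ℝ K (G y) c)
      (((ContinuousLinearMap.apply ℝ ℝ c).comp ((fderiv ℝ (fderiv ℝ K) (G w)).comp G'))) w :=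
    (ContinuousLinearMap.apply ℝ ℝ c).hasFDerivAt.comp w (h3.comp w hG)
  rw [h4.fderiv]; rfl

lemma clm_fst_expand {d p : ℕ} {F : Type*} [NormedAddCommGroup F] [NormedSpace ℝ F]
    (L : ((Fin d → ℝ) × (Fin p → ℝ)) →L[ℝ] F) (v : Fin d → ℝ) :
    L (v, 0) = ∑ k, v k • L (Pi.single k 1, 0) := by
  have h1 : ∑ k, v k • (Pi.single k 1 : Fin d → ℝ) = v := by
    funext m
    simp [Finset.sum_apply, Pi.single_apply, mul_comm]
  have hv : ((v, (0 : Fin p → ℝ)) : (Fin d → ℝ) × (Fin p → ℝ))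
      = ∑ k, v k • ((Pi.single k 1 : Fin d → ℝ), (0 : Fin p → ℝ)) := by
    apply Prod.ext
    · rw [Prod.fst_sum]; simpa using h1.symm
    · rw [Prod.snd_sum]; simp
  rw [hv, map_sum]
  simp only [_root_.map_smul]

lemma pair_split {d p : ℕ} {F : Type*} [NormedAddCommGroup F] [NormedSpace ℝ F]
    (L : ((Fin d → ℝ) × (Fin p → ℝ)) →L[ℝ] F) (v : Fin d → ℝ) (w : Fin p → ℝ) :
    L (v, w) = L (v, 0) + L (0, w) := by
  rw [← map_add]
  norm_num

end stmt3helpers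

/-- the Hessian (in `θ`) of the saddlepoint log-likelihood leading
term `θ ↦ K(t̂(θ),θ) − ⟨t̂(θ),x⟩` equals `H_θ − Jᵀ K''⁻¹ J` evaluated at
`(t̂(θ),θ)`. -/
theorem stmt3 (d p : ℕ) (hd : 0 < d) (hp : 0 < p)
    (K : (Fin d → ℝ) × (Fin p → ℝ) → ℝ) (hK : ContDiff ℝ 2 K)
    (x : Fin d → ℝ)
    (U : Set (Fin p → ℝ)) (hU : IsOpen U)
    (that : (Fin p → ℝ) → (Fin d → ℝ))
    (hdiff : ContDiffOn ℝ 1 that U)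
    (hsaddle : ∀ θ ∈ U, ∀ i : Fin d,
      fderiv ℝ (fun t => K (t, θ)) (that θ) (Pi.single i 1) = x i)
    (H : (Fin p → ℝ) → Matrix (Fin d) (Fin d) ℝ)
    (hH : ∀ θ i j, H θ i j =
      fderiv ℝ (fun t => fderiv ℝ (fun s => K (s, θ)) t (Pi.single j 1)) (that θ)
        (Pi.single i 1))
    (hHinv : ∀ θ ∈ U, IsUnit (H θ).det)
    (Hθ : (Fin p → ℝ) → Matrix (Fin p) (Fin p) ℝ)
    (hHθ : ∀ θ i j, Hθ θ i j =
      fderiv ℝ (fun θ1 => fderiv ℝ (fun θ2 => K (that θ, θ2)) θ1 (Pi.single j 1)) θ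
        (Pi.single i 1))
    (J : (Fin p → ℝ) → Matrix (Fin d) (Fin p) ℝ)
    (hJ : ∀ θ i j, J θ i j =
      fderiv ℝ (fun θ' => fderiv ℝ (fun t => K (t, θ')) (that θ) (Pi.single i 1)) θ
        (Pi.single j 1)) :
    ∀ θ ∈ U,
      (Matrix.of fun i j =>
        fderiv ℝ
          (fun θ1 =>
            fderiv ℝ (fun θ2 => K (that θ2, θ2) - ∑ k : Fin d, that θ2 k * x k) θ1
              (Pi.single j 1))
          θ (Pi.single i 1))
      = Hθ θ - (J θ)ᵀ * (H θ)⁻¹ * J θ := by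
  intro θ hθ
  have hKd : Differentiable ℝ K := hK.differentiable (by norm_num)
  have hthat : ∀ θ1 ∈ U, DifferentiableAt ℝ that θ1 := fun θ1 h1 =>
    (hdiff.contDiffAt (hU.mem_nhds h1)).differentiableAt one_ne_zero
  have hF : ∀ θ1 ∈ U, HasFDerivAt (fun θ2 => (that θ2, θ2))
      ((fderiv ℝ that θ1).prod (ContinuousLinearMap.id ℝ (Fin p → ℝ))) θ1 := fun θ1 h1 =>
    ((hthat θ1 h1).hasFDerivAt).prodMk (hasFDerivAt_id θ1)
  set A := fderiv ℝ (fderiv ℝ K) (that θ, θ) with hA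
  set D := fderiv ℝ that θ with hD
  -- symmetry of the second derivative
  have hsymm : ∀ u v, A u v = A v u := hK.contDiffAt.isSymmSndFDerivAt (by simp)
  -- Step 1: derivative of g on U
  have key : ∀ θ1 ∈ U, ∀ j : Fin p,
      fderiv ℝ (fun θ2 => K (that θ2, θ2) - ∑ k : Fin d, that θ2 k * x k) θ1 (Pi.single j 1)
        = fderiv ℝ K (that θ1, θ1) (0, Pi.single j 1) := by
    intro θ1 h1 j
    set D₁ := fderiv ℝ that θ1 with hD₁
    have hKF : HasFDerivAt (fun θ2 => K (that θ2, θ2))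
        ((fderiv ℝ K (that θ1, θ1)).comp
          (D₁.prod (ContinuousLinearMap.id ℝ (Fin p → ℝ)))) θ1 :=
      (hKd _).hasFDerivAt.comp θ1 (hF θ1 h1)
    set ℓ := (∑ k, x k • (ContinuousLinearMap.proj k :
        ((Fin d → ℝ)) →L[ℝ] ℝ)) with hℓ
    have hℓval : ∀ v : Fin d → ℝ, ℓ v = ∑ k, v k * x k := by
      intro v
      simp [hℓ, ContinuousLinearMap.sum_apply, mul_comm]
    have hlin : HasFDerivAt (fun θ2 => ∑ k : Fin d, that θ2 k * x k) (ℓ.comp D₁) θ1 := by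
      have : (fun θ2 => ∑ k : Fin d, that θ2 k * x k) = fun θ2 => ℓ (that θ2) := by
        funext θ2; rw [hℓval]
      rw [this]
      exact ℓ.hasFDerivAt.comp θ1 (hthat θ1 h1).hasFDerivAt
    have hg : HasFDerivAt (fun θ2 => K (that θ2, θ2) - ∑ k : Fin d, that θ2 k * x k)
        ((fderiv ℝ K (that θ1, θ1)).comp
          (D₁.prod (ContinuousLinearMap.id ℝ (Fin p → ℝ))) - ℓ.comp D₁) θ1 :=
      hKF.sub hlin
    rw [hg.fderiv]
    have h5 : fderiv ℝ K (that θ1, θ1) (D₁ (Pi.single j 1), Pi.single j 1)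
        = fderiv ℝ K (that θ1, θ1) (D₁ (Pi.single j 1), 0)
          + fderiv ℝ K (that θ1, θ1) (0, Pi.single j 1) :=
      pair_split _ _ _
    have h6 : fderiv ℝ K (that θ1, θ1) (D₁ (Pi.single j 1), 0) = ℓ (D₁ (Pi.single j 1)) := by
      rw [clm_fst_expand, hℓval]
      congr 1
      funext k
      rw [← partial_fst K hKd (that θ1) θ1, hsaddle θ1 h1 k, smul_eq_mul, mul_comm]
    simp only [ContinuousLinearMap.sub_apply, ContinuousLinearMap.coe_comp',
      Function.comp_apply, ContinuousLinearMap.prod_apply, ContinuousLinearMap.coe_id',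
      id_eq]
    rw [h5, h6]
    ring
  -- Step 2: LHS entries
  have hLHSentry : ∀ i j,
      fderiv ℝ (fun θ1 =>
        fderiv ℝ (fun θ2 => K (that θ2, θ2) - ∑ k : Fin d, that θ2 k * x k) θ1
          (Pi.single j 1)) θ (Pi.single i 1)
      = A (D (Pi.single i 1), Pi.single i 1) (0, Pi.single j 1) := by
    intro i j
    have hev : (fun θ1 =>
        fderiv ℝ (fun θ2 => K (that θ2, θ2) - ∑ k : Fin d, that θ2 k * x k) θ1
          (Pi.single j 1))
        =ᶠ[nhds θ] fun θ1 => fderiv ℝ K (that θ1, θ1) (0, Pi.single j 1) := by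
      filter_upwards [hU.mem_nhds hθ] with θ1 h1 using key θ1 h1 j
    rw [hev.fderiv_eq]
    exact eval_deriv K hK (hF θ hθ) _ _
  -- Step 3: Hθ entries
  have hHθentry : ∀ i j, Hθ θ i j = A (0, Pi.single i 1) (0, Pi.single j 1) := by
    intro i j
    rw [hHθ]
    have : (fun θ1 => fderiv ℝ (fun θ2 => K (that θ, θ2)) θ1 (Pi.single j 1))
        = fun θ1 => fderiv ℝ K (that θ, θ1) (0, Pi.single j 1) :=
      funext fun θ1 => partial_snd K hKd (that θ) θ1 _
    rw [this]
    exact eval_deriv K hK (hasFDerivAt_prodMk_right (that θ) θ) _ _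
  -- Step 4: J entries
  have hJentry : ∀ i j, J θ i j = A (0, Pi.single j 1) (Pi.single i 1, 0) := by
    intro i j
    rw [hJ]
    have : (fun θ' => fderiv ℝ (fun t => K (t, θ')) (that θ) (Pi.single i 1))
        = fun θ' => fderiv ℝ K (that θ, θ') (Pi.single i 1, 0) :=
      funext fun θ' => partial_fst K hKd (that θ) θ' _
    rw [this]
    exact eval_deriv K hK (hasFDerivAt_prodMk_right (that θ) θ) _ _
  -- Step 5: H entries
  have hHentry : ∀ i j, H θ i j = A (Pi.single i 1, 0) (Pi.single j 1, 0) := by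
    intro i j
    rw [hH]
    have : (fun t => fderiv ℝ (fun s => K (s, θ)) t (Pi.single j 1))
        = fun t => fderiv ℝ K (t, θ) (Pi.single j 1, 0) :=
      funext fun t => partial_fst K hKd t θ _
    rw [this]
    exact eval_deriv K hK (hasFDerivAt_prodMk_left (that θ) θ) _ _
  -- Step 6: differentiated saddlepoint equation
  have hsad2 : ∀ (k : Fin d) (j : Fin p),
      A (D (Pi.single j 1), Pi.single j 1) (Pi.single k 1, 0) = 0 := by
    intro k j
    have hev : (fun θ1 => fderiv ℝ K (that θ1, θ1) ((Pi.single k 1 : Fin d → ℝ), 0))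
        =ᶠ[nhds θ] fun _ => x k := by
      filter_upwards [hU.mem_nhds hθ] with θ1 h1
      rw [← partial_fst K hKd (that θ1) θ1, hsaddle θ1 h1 k]
    have h7 := eval_deriv K hK (hF θ hθ)
      ((Pi.single k 1 : Fin d → ℝ), (0 : Fin p → ℝ)) (Pi.single j 1)
    rw [hev.fderiv_eq, fderiv_fun_const] at h7
    simpa using h7.symm
  -- matrix of the derivative of that
  set Dmat : Matrix (Fin d) (Fin p) ℝ := Matrix.of fun k j => D (Pi.single j 1) k with hDmat
  -- Step 7: H * Dmat = -J
  have hHD : H θ * Dmat = -(J θ) := by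
    ext k j
    have h8 := hsad2 k j
    rw [pair_split A (D (Pi.single j 1)) (Pi.single j 1), ContinuousLinearMap.add_apply] at h8
    have h9 : A (D (Pi.single j 1), 0) (Pi.single k 1, 0)
        = ∑ m, Dmat m j * H θ m k := by
      rw [clm_fst_expand A (D (Pi.single j 1))]
      rw [ContinuousLinearMap.sum_apply]
      congr 1
      funext m
      rw [ContinuousLinearMap.smul_apply, smul_eq_mul, hHentry]
      rfl
    rw [h9, ← hJentry] at h8
    -- h8 : ∑ m, Dmat m j * H θ m k + J θ k j = 0  (up to symm uses)
    have hHsym : ∀ m, H θ m k = H θ k m := by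
      intro m; rw [hHentry, hHentry, hsymm]
    simp only [Matrix.mul_apply, Matrix.neg_apply]
    have : ∑ m, H θ k m * Dmat m j = ∑ m, Dmat m j * H θ m k := by
      congr 1; funext m; rw [hHsym m, mul_comm]
    rw [this]
    linarith [h8]
  -- Step 8: LHS matrix = Hθ + Dmatᵀ * J
  have hLHS : (Matrix.of fun i j =>
      fderiv ℝ (fun θ1 =>
        fderiv ℝ (fun θ2 => K (that θ2, θ2) - ∑ k : Fin d, that θ2 k * x k) θ1
          (Pi.single j 1)) θ (Pi.single i 1))
      = Hθ θ + Dmatᵀ * J θ := by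
    ext i j
    rw [Matrix.of_apply, hLHSentry i j, pair_split A (D (Pi.single i 1)) (Pi.single i 1),
      ContinuousLinearMap.add_apply]
    have h10 : A (D (Pi.single i 1), 0) (0, Pi.single j 1) = ∑ k, Dmat k i * J θ k j := by
      rw [clm_fst_expand A (D (Pi.single i 1)), ContinuousLinearMap.sum_apply]
      congr 1
      funext m
      rw [ContinuousLinearMap.smul_apply, smul_eq_mul, hJentry, hsymm]
      rfl
    rw [h10, ← hHθentry]
    simp only [Matrix.add_apply, Matrix.mul_apply, Matrix.transpose_apply]
    ring
  rw [hLHS]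
  -- Step 9: matrix algebra
  have hu := hHinv θ hθ
  have hDm : Dmat = -((H θ)⁻¹ * J θ) := by
    have h11 : (H θ)⁻¹ * (H θ * Dmat) = (H θ)⁻¹ * (-(J θ)) := by rw [hHD]
    rwa [← Matrix.mul_assoc, Matrix.nonsing_inv_mul _ hu, Matrix.one_mul,
      Matrix.mul_neg] at h11
  have hHsymM : (H θ)ᵀ = H θ := by
    ext i j; rw [Matrix.transpose_apply, hHentry, hHentry, hsymm]
  rw [hDm]
  rw [Matrix.transpose_neg, Matrix.transpose_mul, Matrix.transpose_nonsing_inv, hHsymM]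
  rw [Matrix.neg_mul, Matrix.mul_assoc]
  abel
end

section
/- Let p, d be positive integers, (θ₀, u₀) ∈ ℝ^p × ℝ^d. Let a, b, c : ℝ^p × ℝ^d → ℝ^p be twice continuously differentiable, and let h : ℝ^p × ℝ^d × ℝ → ℝ^p be twice continuously differentiable with h(θ, u, 0) = 0 and ∂h/∂ρ(θ, u, 0) = 0 for all (θ, u). Define F(θ, u, ε, ρ) = a(θ, u) + ε·b(θ, u) + ε·(ρ·c(θ, u) + h(θ, u, ρ)). Assume a(θ₀, u₀) = 0 and that the p×p Jacobian ∇_θa(θ₀, u₀) is invertible, and let G : ℝ^d × ℝ × ℝ → ℝ^p be twice continuously differentiable on a neighborhood of (u₀, 0, 0) with G(u₀, 0, 0) = θ₀ and F(G(u, ε, ρ), u, ε, ρ) = 0 there. Then there exist a neighborhood N of (u₀, 0, 0) and a constant C > 0 such that ‖∂²G/∂ρ²(u, ε, ρ)‖ ≤ C·(|ε| + |ρ|) for all (u, ε, ρ) ∈ N. -/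
set_option maxHeartbeats 1000000


open Matrix


private lemma stmt8_arith {M L0 X Y e r : ℝ} (hM1 : 1 ≤ M) (hL1 : 1 ≤ L0)
    (he : 0 ≤ e) (hr : 0 ≤ r) (hX0 : 0 ≤ X) (hY0 : 0 ≤ Y)
    (heh : M * L0 * e ≤ 1/2)
    (hXb : X ≤ M * (e * (L0 * (X + 1))))
    (hYb : Y ≤ M * (e * (L0 * (X + 1) * (X + 1) + L0 * Y) + L0 * X * X)) :
    Y ≤ (12*M*M*L0*L0 + 1) * (e + r) := by
  have hML0' : (0:ℝ) < M * L0 := by nlinarith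
  have hg'1 : X ≤ 1 := by
    nlinarith [mul_le_mul_of_nonneg_right heh (by linarith : (0:ℝ) ≤ X + 1)]
  have hg'b : X ≤ 2 * (M * L0) * e := by
    nlinarith [hXb, mul_le_mul_of_nonneg_left (by linarith : X + 1 ≤ 2)
      (mul_nonneg (le_of_lt hML0') he)]
  have hMLe0 : (0:ℝ) ≤ M * L0 * e := mul_nonneg (le_of_lt hML0') he
  have e4 : (X + 1) * (X + 1) ≤ 4 := by nlinarith
  have t1 : M * (e * (L0 * (X + 1) * (X + 1))) ≤ 4 * (M * L0) * e := by
    nlinarith [mul_le_mul_of_nonneg_left e4 hMLe0]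
  have t2 : M * (e * (L0 * Y)) ≤ (1/2) * Y := by
    nlinarith [mul_le_mul_of_nonneg_right heh hY0]
  have t3 : M * (L0 * (X * X)) ≤ 2 * (M * L0) * (M * L0) * e := by
    have hXX : X * X ≤ 2 * (M * L0) * e := by
      have h1 : X * X ≤ 1 * (2 * (M * L0) * e) := mul_le_mul hg'1 hg'b hX0 zero_le_one
      linarith [h1]
    nlinarith [mul_le_mul_of_nonneg_left hXX (le_of_lt hML0')]
  have hfin : Y ≤ 8 * (M * L0) * e + 4 * (M * L0) * (M * L0) * e := by nlinarith
  have hML1 : 1 ≤ M * L0 := by nlinarith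
  have hMLsq : (0:ℝ) ≤ (M * L0) * (M * L0) := by nlinarith
  have hC8 : 8 * (M * L0) ≤ 8 * (M * L0) * (M * L0) := by nlinarith
  have h5 : Y ≤ 12 * (M * L0) * (M * L0) * e := by
    nlinarith [hfin, mul_le_mul_of_nonneg_right hC8 he]
  have h6 : 12 * (M * L0) * (M * L0) * e ≤ (12*M*M*L0*L0 + 1) * (e + r) := by
    nlinarith [mul_nonneg hMLsq hr, he, hr]
  linarith [h5, h6]

/-- near `(u₀,0,0)` the second `ρ`-derivative of the implicit
solution `G` is `O(|ε| + |ρ|)`. -/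
theorem stmt8 (p d : ℕ) (hp : 0 < p) (hd : 0 < d)
    (θ₀ : Fin p → ℝ) (u₀ : Fin d → ℝ)
    (a b c : (Fin p → ℝ) → (Fin d → ℝ) → (Fin p → ℝ))
    (ha : ContDiff ℝ 2 (fun q : (Fin p → ℝ) × (Fin d → ℝ) => a q.1 q.2))
    (hb : ContDiff ℝ 2 (fun q : (Fin p → ℝ) × (Fin d → ℝ) => b q.1 q.2))
    (hc : ContDiff ℝ 2 (fun q : (Fin p → ℝ) × (Fin d → ℝ) => c q.1 q.2))
    (h : (Fin p → ℝ) → (Fin d → ℝ) → ℝ → (Fin p → ℝ))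
    (hh : ContDiff ℝ 2 (fun q : (Fin p → ℝ) × (Fin d → ℝ) × ℝ => h q.1 q.2.1 q.2.2))
    (hh0 : ∀ θ u, h θ u 0 = 0)
    (hhρ : ∀ θ u, deriv (fun ρ => h θ u ρ) 0 = 0)
    (F : (Fin p → ℝ) → (Fin d → ℝ) → ℝ → ℝ → (Fin p → ℝ))
    (hF : ∀ θ u ε ρ, F θ u ε ρ = a θ u + ε • b θ u + ε • (ρ • c θ u + h θ u ρ))
    (ha0 : a θ₀ u₀ = 0)
    (Ja : Matrix (Fin p) (Fin p) ℝ)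
    (hJa : ∀ i j, Ja i j = fderiv ℝ (fun θ => a θ u₀ i) θ₀ (Pi.single j 1))
    (hJaInv : IsUnit Ja.det)
    (G : (Fin d → ℝ) → ℝ → ℝ → (Fin p → ℝ))
    (V : Set ((Fin d → ℝ) × ℝ × ℝ)) (hVopen : IsOpen V)
    (hV : ((u₀, 0, 0) : (Fin d → ℝ) × ℝ × ℝ) ∈ V)
    (hG : ContDiffOn ℝ 2 (fun q : (Fin d → ℝ) × ℝ × ℝ => G q.1 q.2.1 q.2.2) V)
    (hG0 : G u₀ 0 0 = θ₀)
    (hFG : ∀ q ∈ V, F (G q.1 q.2.1 q.2.2) q.1 q.2.1 q.2.2 = 0) :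
    ∃ N ∈ nhds ((u₀, 0, 0) : (Fin d → ℝ) × ℝ × ℝ), ∃ C > (0:ℝ),
      ∀ q ∈ N,
        ‖deriv (fun s => deriv (fun ρ => G q.1 q.2.1 ρ) s) q.2.2‖
          ≤ C * (|q.2.1| + |q.2.2|) := by
  classical
  set q₀ : (Fin d → ℝ) × ℝ × ℝ := (u₀, 0, 0) with hq₀def
  -- uncurried versions
  set abar : (Fin p → ℝ) × (Fin d → ℝ) → (Fin p → ℝ) := fun x => a x.1 x.2 with habar_def
  have habar : ContDiff ℝ 2 abar := ha
  set Kb : (Fin p → ℝ) × (Fin d → ℝ) × ℝ → (Fin p → ℝ) :=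
    fun y => b y.1 y.2.1 + (y.2.2 • c y.1 y.2.1 + h y.1 y.2.1 y.2.2) with hKb_def
  have hKbC : ContDiff ℝ 2 Kb := by
    refine ContDiff.add ?_ (ContDiff.add ?_ hh)
    · exact hb.comp (contDiff_fst.prodMk contDiff_snd.fst)
    · exact ContDiff.smul contDiff_snd.snd (hc.comp (contDiff_fst.prodMk contDiff_snd.fst))
  set Gq : (Fin d → ℝ) × ℝ × ℝ → (Fin p → ℝ) := fun q => G q.1 q.2.1 q.2.2 with hGq_def
  have hGqC : ContDiffOn ℝ 2 Gq V := hG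
  -- differentiability facts
  have h12 : (1 : WithTop ℕ∞) ≤ 2 := by norm_num
  have h112 : (1 + 1 : WithTop ℕ∞) ≤ 2 := by norm_num
  have habard : Differentiable ℝ abar := habar.differentiable (by norm_num)
  have hKbd : Differentiable ℝ Kb := hKbC.differentiable (by norm_num)
  have habarC1 : ContDiff ℝ 1 (fderiv ℝ abar) := habar.fderiv_right h112
  have hKbC1 : ContDiff ℝ 1 (fderiv ℝ Kb) := hKbC.fderiv_right h112
  -- the linearized operator Θ
  set Θ : (Fin d → ℝ) × ℝ × ℝ → ((Fin p → ℝ) →L[ℝ] (Fin p → ℝ)) :=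
    fun q => (fderiv ℝ abar (Gq q, q.1)).comp
      (ContinuousLinearMap.inl ℝ (Fin p → ℝ) (Fin d → ℝ)) with hΘ_def
  have hGq0 : Gq q₀ = θ₀ := hG0
  -- Θ q₀ is invertible
  have hU : IsUnit (Θ q₀) := by
    have hmul : ∀ v : Fin p → ℝ, Θ q₀ v = Ja.mulVec v := by
      intro v
      have hincl : HasFDerivAt (fun θ : Fin p → ℝ => ((θ, u₀) : (Fin p → ℝ) × (Fin d → ℝ)))
          (ContinuousLinearMap.inl ℝ (Fin p → ℝ) (Fin d → ℝ)) θ₀ :=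
        (hasFDerivAt_id (𝕜 := ℝ) θ₀).prodMk (hasFDerivAt_const (𝕜 := ℝ) u₀ θ₀)
      have hcomp : HasFDerivAt (fun θ : Fin p → ℝ => a θ u₀) (Θ q₀) θ₀ := by
        have h1 := (habard (θ₀, u₀)).hasFDerivAt.comp θ₀ hincl
        have h2 : Θ q₀ = (fderiv ℝ abar (θ₀, u₀)).comp
            (ContinuousLinearMap.inl ℝ (Fin p → ℝ) (Fin d → ℝ)) := by
          have : (Gq q₀, q₀.1) = ((θ₀, u₀) : (Fin p → ℝ) × (Fin d → ℝ)) := by rw [hGq0]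
          simp only [hΘ_def]
          rw [this]
        rw [h2]
        exact h1
      have hJa' : ∀ i j, Ja i j = (Θ q₀ (Pi.single j 1)) i := by
        intro i j
        have hcoord : HasFDerivAt (fun θ : Fin p → ℝ => a θ u₀ i)
            ((ContinuousLinearMap.proj (R := ℝ) (φ := fun _ : Fin p => ℝ) i).comp (Θ q₀)) θ₀ :=
          (ContinuousLinearMap.proj (R := ℝ) (φ := fun _ : Fin p => ℝ) i).hasFDerivAt.comp θ₀ hcomp
        rw [hJa i j, hcoord.fderiv]
        rfl
      have hv : v = ∑ j, v j • (Pi.single j 1 : Fin p → ℝ) := by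
        have hpe := pi_eq_sum_univ v
        convert hpe using 2 with j
        funext k
        simp [Pi.single_apply, eq_comm]
      conv_lhs => rw [hv]
      rw [map_sum]
      funext i
      simp only [Finset.sum_apply, _root_.map_smul, Pi.smul_apply, smul_eq_mul]
      rw [Matrix.mulVec, dotProduct]
      refine Finset.sum_congr rfl fun j _ => ?_
      rw [hJa' i j]
      ring
    set Ninv : (Fin p → ℝ) →L[ℝ] (Fin p → ℝ) :=
      LinearMap.toContinuousLinearMap (Matrix.toLin' Ja⁻¹) with hNinv
    have hmulN : ∀ v : Fin p → ℝ, Ninv v = Ja⁻¹.mulVec v := fun v => rfl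
    refine ⟨⟨Θ q₀, Ninv, ?_, ?_⟩, rfl⟩
    · ext v
      simp only [ContinuousLinearMap.mul_apply, ContinuousLinearMap.one_apply, hmul, hmulN,
        Matrix.mulVec_mulVec, Matrix.mul_nonsing_inv Ja hJaInv, Matrix.one_mulVec]
    · ext v
      simp only [ContinuousLinearMap.mul_apply, ContinuousLinearMap.one_apply, hmul, hmulN,
        Matrix.mulVec_mulVec, Matrix.nonsing_inv_mul Ja hJaInv, Matrix.one_mulVec]
  -- continuity near q₀
  have hGqc : ContinuousAt Gq q₀ := hGqC.continuousOn.continuousAt (hVopen.mem_nhds hV)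
  have hxc : ContinuousAt (fun q : (Fin d → ℝ) × ℝ × ℝ =>
      ((Gq q, q.1) : (Fin p → ℝ) × (Fin d → ℝ))) q₀ := hGqc.prodMk continuousAt_fst
  have hyc : ContinuousAt (fun q : (Fin d → ℝ) × ℝ × ℝ =>
      ((Gq q, q.1, q.2.2) : (Fin p → ℝ) × (Fin d → ℝ) × ℝ)) q₀ :=
    hGqc.prodMk (continuousAt_fst.prodMk ((continuous_snd.comp continuous_snd).continuousAt))
  have hΘc : ContinuousAt Θ q₀ := by
    have h1 : ContinuousAt (fun q : (Fin d → ℝ) × ℝ × ℝ => fderiv ℝ abar (Gq q, q.1)) q₀ :=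
      ((habar.continuous_fderiv (by norm_num)).continuousAt).comp hxc
    have h2 := ((ContinuousLinearMap.compL ℝ (Fin p → ℝ) ((Fin p → ℝ) × (Fin d → ℝ))
        (Fin p → ℝ)).flip (ContinuousLinearMap.inl ℝ (Fin p → ℝ) (Fin d → ℝ))).continuous
    exact (h2.continuousAt).comp h1
  have hinvc : ContinuousAt (fun q : (Fin d → ℝ) × ℝ × ℝ => Ring.inverse (Θ q)) q₀ := by
    obtain ⟨un, hun⟩ := hU
    exact (hun ▸ NormedRing.inverse_continuousAt un).comp hΘc
  -- the constants
  set M : ℝ := ‖Ring.inverse (Θ q₀)‖ + 1 with hM_def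
  have hM1 : 1 ≤ M := by
    have := norm_nonneg (Ring.inverse (Θ q₀)); rw [hM_def]; linarith
  set W2 : (Fin d → ℝ) × ℝ × ℝ → ℝ :=
    fun q => ‖fderiv ℝ (fderiv ℝ abar) (Gq q, q.1)‖ with hW2_def
  set W3 : (Fin d → ℝ) × ℝ × ℝ → ℝ :=
    fun q => ‖fderiv ℝ Kb (Gq q, q.1, q.2.2)‖ with hW3_def
  set W4 : (Fin d → ℝ) × ℝ × ℝ → ℝ :=
    fun q => ‖fderiv ℝ (fderiv ℝ Kb) (Gq q, q.1, q.2.2)‖ with hW4_def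
  have hW2c : ContinuousAt W2 q₀ :=
    (((habarC1.continuous_fderiv (by norm_num)).continuousAt).comp hxc).norm
  have hW3c : ContinuousAt W3 q₀ :=
    (((hKbC.continuous_fderiv (by norm_num)).continuousAt).comp hyc).norm
  have hW4c : ContinuousAt W4 q₀ :=
    (((hKbC1.continuous_fderiv (by norm_num)).continuousAt).comp hyc).norm
  set L0 : ℝ := max (max (W2 q₀ + 1) (W3 q₀ + 1)) (max (W4 q₀ + 1) 1) with hL0_def
  have hL1 : 1 ≤ L0 := le_max_of_le_right (le_max_right _ _)
  have hML0 : (0:ℝ) < M * L0 := by nlinarith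
  -- the eventual neighborhood
  have hevV : ∀ᶠ q in nhds q₀, q ∈ V := hVopen.mem_nhds hV
  have hevU : ∀ᶠ q in nhds q₀, IsUnit (Θ q) :=
    hΘc.eventually_mem (Units.isOpen.mem_nhds hU)
  have hevM : ∀ᶠ q in nhds q₀, ‖Ring.inverse (Θ q)‖ ≤ M := by
    have hmem : ∀ᶠ q' in nhds q₀, ‖Ring.inverse (Θ q')‖ ∈ Set.Iio M :=
      hinvc.norm.eventually_mem (isOpen_Iio.mem_nhds
        (by simp only [Set.mem_Iio, hM_def]; linarith))
    filter_upwards [hmem] with q hq using le_of_lt hq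
  have hevW2 : ∀ᶠ q in nhds q₀, W2 q ≤ L0 := by
    have := hW2c.eventually_mem (isOpen_Iio.mem_nhds
      (by simp only [Set.mem_Iio]; linarith : W2 q₀ ∈ Set.Iio (W2 q₀ + 1)))
    filter_upwards [this] with q hq
    exact le_trans (le_of_lt hq) (le_max_of_le_left (le_max_left _ _))
  have hevW3 : ∀ᶠ q in nhds q₀, W3 q ≤ L0 := by
    have := hW3c.eventually_mem (isOpen_Iio.mem_nhds
      (by simp only [Set.mem_Iio]; linarith : W3 q₀ ∈ Set.Iio (W3 q₀ + 1)))
    filter_upwards [this] with q hq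
    exact le_trans (le_of_lt hq) (le_max_of_le_left (le_max_right _ _))
  have hevW4 : ∀ᶠ q in nhds q₀, W4 q ≤ L0 := by
    have := hW4c.eventually_mem (isOpen_Iio.mem_nhds
      (by simp only [Set.mem_Iio]; linarith : W4 q₀ ∈ Set.Iio (W4 q₀ + 1)))
    filter_upwards [this] with q hq
    exact le_trans (le_of_lt hq) (le_max_of_le_right (le_max_left _ _))
  have hevε : ∀ᶠ q in nhds q₀, |q.2.1| ≤ 1 ∧ M * L0 * |q.2.1| ≤ 1/2 := by
    have hδpos : (0:ℝ) < min 1 (1/(2*(M*L0))) := lt_min one_pos (by apply one_div_pos.mpr; linarith)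
    have hcont : ContinuousAt (fun q : (Fin d → ℝ) × ℝ × ℝ => |q.2.1|) q₀ :=
      ((continuous_fst.comp continuous_snd).abs).continuousAt
    have h0 : |q₀.2.1| ∈ Set.Iio (min 1 (1/(2*(M*L0)))) := by
      rw [Set.mem_Iio, hq₀def]
      simpa using hδpos
    have := hcont.eventually_mem (isOpen_Iio.mem_nhds h0)
    filter_upwards [this] with q hq
    rw [Set.mem_Iio] at hq
    constructor
    · exact le_of_lt (lt_of_lt_of_le hq (min_le_left _ _))
    · have h1 : |q.2.1| ≤ 1/(2*(M*L0)) := le_of_lt (lt_of_lt_of_le hq (min_le_right _ _))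
      have h2 := mul_le_mul_of_nonneg_left h1 (le_of_lt hML0)
      have hne : (2*(M*L0)) ≠ 0 := ne_of_gt (by linarith)
      have h3 : M * L0 * (1/(2*(M*L0))) = 1/2 := by
        rw [mul_one_div, div_eq_div_iff hne two_ne_zero]
        ring
      linarith [h2, h3.le, h3.ge]
  -- assemble the neighborhood
  have hbig : ∀ᶠ q in nhds q₀, q ∈ V ∧ IsUnit (Θ q) ∧ ‖Ring.inverse (Θ q)‖ ≤ M ∧
      W2 q ≤ L0 ∧ W3 q ≤ L0 ∧ W4 q ≤ L0 ∧ |q.2.1| ≤ 1 ∧ M * L0 * |q.2.1| ≤ 1/2 := by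
    filter_upwards [hevV, hevU, hevM, hevW2, hevW3, hevW4, hevε] with q h1 h2 h3 h4 h5 h6 h7
    exact ⟨h1, h2, h3, h4, h5, h6, h7.1, h7.2⟩
  refine ⟨_, hbig, 12*M*M*L0*L0 + 1, by nlinarith, ?_⟩
  rintro ⟨u, ε, ρ⟩ ⟨hqV, hqU, hqM, hq2, hq3, hq4, hqε1, hqεh⟩
  -- the slice function
  set g : ℝ → (Fin p → ℝ) := fun s => G u ε s with hg_def
  show ‖deriv (deriv g) ρ‖ ≤ (12*M*M*L0*L0 + 1) * (|ε| + |ρ|)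
  set I : Set ℝ := {s : ℝ | ((u, ε, s) : (Fin d → ℝ) × ℝ × ℝ) ∈ V} with hI_def
  have hIopen : IsOpen I := by
    have hγc : Continuous (fun s : ℝ => ((u, ε, s) : (Fin d → ℝ) × ℝ × ℝ)) :=
      continuous_const.prodMk (continuous_const.prodMk continuous_id)
    exact hVopen.preimage hγc
  have hρI : ρ ∈ I := hqV
  have gC2 : ContDiffOn ℝ 2 g I := by
    have hγ : ContDiff ℝ 2 (fun s : ℝ => ((u, ε, s) : (Fin d → ℝ) × ℝ × ℝ)) :=
      contDiff_const.prodMk (contDiff_const.prodMk contDiff_id)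
    exact hGqC.comp hγ.contDiffOn (fun s hs => hs)
  have hderivg : ∀ s ∈ I, HasDerivAt g (deriv g s) s := fun s hs =>
    ((gC2.differentiableOn (by norm_num) s hs).differentiableAt (hIopen.mem_nhds hs)).hasDerivAt
  have hdg1 : ContDiffOn ℝ 1 (deriv g) I := gC2.deriv_of_isOpen hIopen h112
  have hg''At : HasDerivAt (deriv g) (deriv (deriv g) ρ) ρ :=
    ((hdg1.differentiableOn (by norm_num) ρ hρI).differentiableAt (hIopen.mem_nhds hρI)).hasDerivAt
  -- the basic identity on I
  have hzero : ∀ s ∈ I, a (g s) u + ε • Kb (g s, u, s) = 0 := by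
    intro s hs
    have h0 := hFG (u, ε, s) hs
    rw [hF] at h0
    have : a (g s) u + ε • Kb (g s, u, s)
        = a (G u ε s) u + ε • b (G u ε s) u + ε • (s • c (G u ε s) u + h (G u ε s) u s) := by
      rw [hKb_def, hg_def]
      simp only [smul_add]
      abel
    rw [this]
    exact h0
  -- first derivative identity on I
  have E1 : ∀ s ∈ I, fderiv ℝ abar (g s, u) (deriv g s, 0)
      = -(ε • fderiv ℝ Kb (g s, u, s) (deriv g s, ((0 : Fin d → ℝ), (1:ℝ)))) := by
    intro s hs
    have hx : HasDerivAt (fun t => ((g t, u) : (Fin p → ℝ) × (Fin d → ℝ)))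
        (deriv g s, 0) s := (hderivg s hs).prodMk (hasDerivAt_const s u)
    have hΦs : HasDerivAt (fun t => a (g t) u)
        (fderiv ℝ abar (g s, u) (deriv g s, 0)) s :=
      by have := (habard (g s, u)).hasFDerivAt.comp_hasDerivAt s hx; exact this
    have hy : HasDerivAt (fun t => ((g t, u, t) : (Fin p → ℝ) × (Fin d → ℝ) × ℝ))
        (deriv g s, ((0 : Fin d → ℝ), (1:ℝ))) s :=
      (hderivg s hs).prodMk ((hasDerivAt_const s u).prodMk (hasDerivAt_id s))
    have hΨs : HasDerivAt (fun t => Kb (g t, u, t))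
        (fderiv ℝ Kb (g s, u, s) (deriv g s, ((0 : Fin d → ℝ), (1:ℝ)))) s :=
      by have := (hKbd (g s, u, s)).hasFDerivAt.comp_hasDerivAt s hy; exact this
    have heq : (fun t => a (g t) u) =ᶠ[nhds s] fun t => -(ε • Kb (g t, u, t)) := by
      filter_upwards [hIopen.mem_nhds hs] with t ht
      exact eq_neg_of_add_eq_zero_left (hzero t ht)
    exact hΦs.unique (((hΨs.const_smul ε).neg).congr_of_eventuallyEq heq)
  -- second derivative identity at ρ
  have hxρ : HasDerivAt (fun t => ((g t, u) : (Fin p → ℝ) × (Fin d → ℝ)))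
      (deriv g ρ, 0) ρ := (hderivg ρ hρI).prodMk (hasDerivAt_const ρ u)
  have hyρ : HasDerivAt (fun t => ((g t, u, t) : (Fin p → ℝ) × (Fin d → ℝ) × ℝ))
      (deriv g ρ, ((0 : Fin d → ℝ), (1:ℝ))) ρ :=
    (hderivg ρ hρI).prodMk ((hasDerivAt_const ρ u).prodMk (hasDerivAt_id ρ))
  have hA : HasDerivAt (fun s => fderiv ℝ abar (g s, u))
      ((fderiv ℝ (fderiv ℝ abar) (g ρ, u)) (deriv g ρ, 0)) ρ :=
    ((habarC1.differentiable (by norm_num)) (g ρ, u)).hasFDerivAt.comp_hasDerivAt ρ hxρ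
  have hv : HasDerivAt (fun s => ((deriv g s, (0 : Fin d → ℝ)) :
      (Fin p → ℝ) × (Fin d → ℝ))) (deriv (deriv g) ρ, 0) ρ :=
    hg''At.prodMk (hasDerivAt_const ρ (0 : Fin d → ℝ))
  have hΦ₁ := hA.clm_apply hv
  have hB : HasDerivAt (fun s => fderiv ℝ Kb (g s, u, s))
      ((fderiv ℝ (fderiv ℝ Kb) (g ρ, u, ρ)) (deriv g ρ, ((0 : Fin d → ℝ), (1:ℝ)))) ρ :=
    ((hKbC1.differentiable (by norm_num)) (g ρ, u, ρ)).hasFDerivAt.comp_hasDerivAt ρ hyρ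
  have hw : HasDerivAt (fun s => ((deriv g s, ((0 : Fin d → ℝ), (1:ℝ))) :
      (Fin p → ℝ) × (Fin d → ℝ) × ℝ)) (deriv (deriv g) ρ, 0) ρ :=
    hg''At.prodMk (hasDerivAt_const ρ ((0 : Fin d → ℝ), (1:ℝ)))
  have hΨ₁ := hB.clm_apply hw
  have heq2 : (fun s => fderiv ℝ abar (g s, u) (deriv g s, 0))
      =ᶠ[nhds ρ] fun s => -(ε • fderiv ℝ Kb (g s, u, s)
        (deriv g s, ((0 : Fin d → ℝ), (1:ℝ)))) := by
    filter_upwards [hIopen.mem_nhds hρI] with t ht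
    exact E1 t ht
  have E2 := hΦ₁.unique (((hΨ₁.const_smul ε).neg).congr_of_eventuallyEq heq2)
  -- abbreviations
  set X : ℝ := ‖deriv g ρ‖ with hX_def
  set Y : ℝ := ‖deriv (deriv g) ρ‖ with hY_def
  have hX0 : 0 ≤ X := norm_nonneg _
  have hY0 : 0 ≤ Y := norm_nonneg _
  -- norm computations in products
  have nrm1 : ∀ v : Fin p → ℝ, ‖((v, (0 : Fin d → ℝ)) : (Fin p → ℝ) × (Fin d → ℝ))‖ = ‖v‖ := by
    intro v
    rw [Prod.norm_def, norm_zero]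
    exact max_eq_left (norm_nonneg v)
  have nrm2 : ∀ v : Fin p → ℝ,
      ‖((v, ((0 : Fin d → ℝ), (1:ℝ))) : (Fin p → ℝ) × (Fin d → ℝ) × ℝ)‖ ≤ ‖v‖ + 1 := by
    intro v
    have h0 := norm_nonneg v
    rw [Prod.norm_def, Prod.norm_def, norm_zero, norm_one]
    rw [max_le_iff]
    refine ⟨by linarith, ?_⟩
    rw [max_le_iff]
    constructor <;> linarith
  have nrm3 : ∀ v : Fin p → ℝ,
      ‖((v, (0 : (Fin d → ℝ) × ℝ)) : (Fin p → ℝ) × (Fin d → ℝ) × ℝ)‖ = ‖v‖ := by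
    intro v
    rw [Prod.norm_def, norm_zero]
    exact max_eq_left (norm_nonneg v)
  -- the key coercivity estimate
  have key : ∀ v : Fin p → ℝ, ‖v‖ ≤ M * ‖fderiv ℝ abar (g ρ, u) (v, (0 : Fin d → ℝ))‖ := by
    intro v
    have h1 : Ring.inverse (Θ (u, ε, ρ)) * Θ (u, ε, ρ) = 1 :=
      Ring.inverse_mul_cancel _ hqU
    have h2 : Ring.inverse (Θ (u, ε, ρ)) (Θ (u, ε, ρ) v) = v := by
      have h3 := congrArg (fun T : (Fin p → ℝ) →L[ℝ] (Fin p → ℝ) => T v) h1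
      simpa using h3
    calc ‖v‖ = ‖Ring.inverse (Θ (u, ε, ρ)) (Θ (u, ε, ρ) v)‖ := by rw [h2]
      _ ≤ ‖Ring.inverse (Θ (u, ε, ρ))‖ * ‖Θ (u, ε, ρ) v‖ :=
          ContinuousLinearMap.le_opNorm _ _
      _ ≤ M * ‖Θ (u, ε, ρ) v‖ := mul_le_mul_of_nonneg_right hqM (norm_nonneg _)
  -- bounds on the operator norms at the current point
  have hq2' : ‖fderiv ℝ (fderiv ℝ abar) (g ρ, u)‖ ≤ L0 := hq2
  have hq3' : ‖fderiv ℝ Kb (g ρ, u, ρ)‖ ≤ L0 := hq3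
  have hq4' : ‖fderiv ℝ (fderiv ℝ Kb) (g ρ, u, ρ)‖ ≤ L0 := hq4
  have hL00 : (0:ℝ) ≤ L0 := by linarith
  -- first-order bound
  have hBop : ‖fderiv ℝ Kb (g ρ, u, ρ) (deriv g ρ, ((0 : Fin d → ℝ), (1:ℝ)))‖
      ≤ L0 * (X + 1) := by
    calc ‖fderiv ℝ Kb (g ρ, u, ρ) (deriv g ρ, ((0 : Fin d → ℝ), (1:ℝ)))‖
        ≤ ‖fderiv ℝ Kb (g ρ, u, ρ)‖ * ‖((deriv g ρ, ((0 : Fin d → ℝ), (1:ℝ))) :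
            (Fin p → ℝ) × (Fin d → ℝ) × ℝ)‖ := ContinuousLinearMap.le_opNorm _ _
      _ ≤ L0 * (X + 1) :=
          mul_le_mul hq3' (nrm2 _) (norm_nonneg _) hL00
  have hXb : X ≤ M * (|ε| * (L0 * (X + 1))) := by
    calc X ≤ M * ‖fderiv ℝ abar (g ρ, u) (deriv g ρ, (0 : Fin d → ℝ))‖ := key _
      _ = M * ‖-(ε • fderiv ℝ Kb (g ρ, u, ρ) (deriv g ρ, ((0 : Fin d → ℝ), (1:ℝ))))‖ := by
          rw [E1 ρ hρI]
      _ = M * (|ε| * ‖fderiv ℝ Kb (g ρ, u, ρ) (deriv g ρ, ((0 : Fin d → ℝ), (1:ℝ)))‖) := by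
          rw [norm_neg, norm_smul, Real.norm_eq_abs]
      _ ≤ M * (|ε| * (L0 * (X + 1))) := by
          have hM0 : (0:ℝ) ≤ M := by linarith
          exact mul_le_mul_of_nonneg_left
            (mul_le_mul_of_nonneg_left hBop (abs_nonneg ε)) hM0
  -- second-order bound
  have hZeq : fderiv ℝ abar (g ρ, u) (deriv (deriv g) ρ, 0)
      = -(ε • ((fderiv ℝ (fderiv ℝ Kb) (g ρ, u, ρ)) (deriv g ρ, ((0 : Fin d → ℝ), (1:ℝ)))
          (deriv g ρ, ((0 : Fin d → ℝ), (1:ℝ)))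
        + fderiv ℝ Kb (g ρ, u, ρ) (deriv (deriv g) ρ, 0)))
      - (fderiv ℝ (fderiv ℝ abar) (g ρ, u)) (deriv g ρ, 0) (deriv g ρ, 0) := by
    rw [← E2]
    abel
  have hT1 : ‖(fderiv ℝ (fderiv ℝ abar) (g ρ, u)) (deriv g ρ, 0) (deriv g ρ, 0)‖
      ≤ L0 * X * X := by
    calc ‖(fderiv ℝ (fderiv ℝ abar) (g ρ, u)) (deriv g ρ, 0) (deriv g ρ, 0)‖
        ≤ ‖(fderiv ℝ (fderiv ℝ abar) (g ρ, u)) (deriv g ρ, 0)‖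
          * ‖((deriv g ρ, (0 : Fin d → ℝ)) : (Fin p → ℝ) × (Fin d → ℝ))‖ :=
          ContinuousLinearMap.le_opNorm _ _
      _ ≤ (‖fderiv ℝ (fderiv ℝ abar) (g ρ, u)‖
          * ‖((deriv g ρ, (0 : Fin d → ℝ)) : (Fin p → ℝ) × (Fin d → ℝ))‖)
          * ‖((deriv g ρ, (0 : Fin d → ℝ)) : (Fin p → ℝ) × (Fin d → ℝ))‖ :=
          mul_le_mul_of_nonneg_right (ContinuousLinearMap.le_opNorm _ _) (norm_nonneg _)
      _ = ‖fderiv ℝ (fderiv ℝ abar) (g ρ, u)‖ * X * X := by rw [nrm1]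
      _ ≤ L0 * X * X := by
          exact mul_le_mul_of_nonneg_right (mul_le_mul_of_nonneg_right hq2' hX0) hX0
  have hT2 : ‖((fderiv ℝ (fderiv ℝ Kb) (g ρ, u, ρ)) (deriv g ρ, ((0 : Fin d → ℝ), (1:ℝ)))
      (deriv g ρ, ((0 : Fin d → ℝ), (1:ℝ))))‖ ≤ L0 * (X + 1) * (X + 1) := by
    have hw1 : ‖((deriv g ρ, ((0 : Fin d → ℝ), (1:ℝ))) :
        (Fin p → ℝ) × (Fin d → ℝ) × ℝ)‖ ≤ X + 1 := nrm2 _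
    calc ‖((fderiv ℝ (fderiv ℝ Kb) (g ρ, u, ρ)) (deriv g ρ, ((0 : Fin d → ℝ), (1:ℝ)))
          (deriv g ρ, ((0 : Fin d → ℝ), (1:ℝ))))‖
        ≤ ‖(fderiv ℝ (fderiv ℝ Kb) (g ρ, u, ρ)) (deriv g ρ, ((0 : Fin d → ℝ), (1:ℝ)))‖
          * ‖((deriv g ρ, ((0 : Fin d → ℝ), (1:ℝ))) : (Fin p → ℝ) × (Fin d → ℝ) × ℝ)‖ :=
          ContinuousLinearMap.le_opNorm _ _
      _ ≤ (‖fderiv ℝ (fderiv ℝ Kb) (g ρ, u, ρ)‖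
          * ‖((deriv g ρ, ((0 : Fin d → ℝ), (1:ℝ))) : (Fin p → ℝ) × (Fin d → ℝ) × ℝ)‖)
          * ‖((deriv g ρ, ((0 : Fin d → ℝ), (1:ℝ))) : (Fin p → ℝ) × (Fin d → ℝ) × ℝ)‖ :=
          mul_le_mul_of_nonneg_right (ContinuousLinearMap.le_opNorm _ _) (norm_nonneg _)
      _ ≤ L0 * (X + 1) * (X + 1) := by
          have h0 := norm_nonneg ((deriv g ρ, ((0 : Fin d → ℝ), (1:ℝ))) :
            (Fin p → ℝ) × (Fin d → ℝ) × ℝ)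
          exact mul_le_mul (mul_le_mul hq4' hw1 h0 hL00) hw1 h0
            (mul_nonneg hL00 (by linarith))
  have hT3 : ‖fderiv ℝ Kb (g ρ, u, ρ) (deriv (deriv g) ρ, 0)‖ ≤ L0 * Y := by
    calc ‖fderiv ℝ Kb (g ρ, u, ρ) (deriv (deriv g) ρ, 0)‖
        ≤ ‖fderiv ℝ Kb (g ρ, u, ρ)‖ * ‖((deriv (deriv g) ρ, (0 : (Fin d → ℝ) × ℝ)) :
            (Fin p → ℝ) × (Fin d → ℝ) × ℝ)‖ := ContinuousLinearMap.le_opNorm _ _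
      _ = ‖fderiv ℝ Kb (g ρ, u, ρ)‖ * Y := by rw [nrm3]
      _ ≤ L0 * Y := mul_le_mul_of_nonneg_right hq3' hY0
  have hYb : Y ≤ M * (|ε| * (L0 * (X + 1) * (X + 1) + L0 * Y) + L0 * X * X) := by
    calc Y ≤ M * ‖fderiv ℝ abar (g ρ, u) (deriv (deriv g) ρ, (0 : Fin d → ℝ))‖ := key _
      _ ≤ M * (|ε| * (L0 * (X + 1) * (X + 1) + L0 * Y) + L0 * X * X) := by
          rw [hZeq]
          have hbnd : ‖-(ε • ((fderiv ℝ (fderiv ℝ Kb) (g ρ, u, ρ))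
              (deriv g ρ, ((0 : Fin d → ℝ), (1:ℝ))) (deriv g ρ, ((0 : Fin d → ℝ), (1:ℝ)))
              + fderiv ℝ Kb (g ρ, u, ρ) (deriv (deriv g) ρ, 0)))
              - (fderiv ℝ (fderiv ℝ abar) (g ρ, u)) (deriv g ρ, 0) (deriv g ρ, 0)‖
              ≤ |ε| * (L0 * (X + 1) * (X + 1) + L0 * Y) + L0 * X * X := by
            refine le_trans (norm_sub_le _ _) ?_
            have h1 : ‖-(ε • ((fderiv ℝ (fderiv ℝ Kb) (g ρ, u, ρ))
                (deriv g ρ, ((0 : Fin d → ℝ), (1:ℝ))) (deriv g ρ, ((0 : Fin d → ℝ), (1:ℝ)))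
                + fderiv ℝ Kb (g ρ, u, ρ) (deriv (deriv g) ρ, 0)))‖
                ≤ |ε| * (L0 * (X + 1) * (X + 1) + L0 * Y) := by
              rw [norm_neg, norm_smul, Real.norm_eq_abs]
              refine mul_le_mul_of_nonneg_left ?_ (abs_nonneg ε)
              exact le_trans (norm_add_le _ _) (add_le_add hT2 hT3)
            exact add_le_add h1 hT1
          exact mul_le_mul_of_nonneg_left hbnd (by linarith)
  exact stmt8_arith hM1 hL1 (abs_nonneg ε) (abs_nonneg ρ) hX0 hY0 hqεh hXb hYb
end

section
/- Let p, d be positive integers, (θ₀, u₀) ∈ ℝ^p × ℝ^d. Let a, b, c : ℝ^p × ℝ^d → ℝ^p be twice continuously differentiable, and let h : ℝ^p × ℝ^d × ℝ → ℝ^p be twice continuously differentiable with h(θ, u, 0) = 0 and ∂h/∂ρ(θ, u, 0) = 0 for all (θ, u). Define F(θ, u, ε, ρ) = a(θ, u) + ε·b(θ, u) + ε·(ρ·c(θ, u) + h(θ, u, ρ)). Assume a(θ₀, u₀) = 0 and ∇_θa(θ₀, u₀) invertible, and let G be twice continuously differentiable on a neighborhood of (u₀, 0, 0) with G(u₀,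 0, 0) = θ₀ and F(G(u, ε, ρ), u, ε, ρ) = 0 there. For a sequence u_n → u₀ in ℝ^d, define the true discrepancy δ_n = G(u_n, 1/n, 1/n) − G(u_n, 1/n, 0) and the approximated discrepancy δ̂_n = (1/n)·∂G/∂ρ(u_n, 1/n, 0). Then there exists C > 0 such that for all sufficiently large n, ‖δ_n − δ̂_n‖ ≤ C·n⁻³. -/
open Matrix Filter

private lemma lip_of_cdOn {E F : Type*} [NormedAddCommGroup E] [NormedSpace ℝ E]
    [NormedAddCommGroup F] [NormedSpace ℝ F] {f : E → F} {V : Set E} (hV : IsOpen V)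
    (hf : ContDiffOn ℝ 1 f V) {s : Set E} (hs : Convex ℝ s) (hsc : IsCompact s) (hsV : s ⊆ V) :
    ∃ K : ℝ, 0 ≤ K ∧ ∀ x ∈ s, ∀ y ∈ s, ‖f x - f y‖ ≤ K * ‖x - y‖ := by
  have hcont : ContinuousOn (fderiv ℝ f) V := hf.continuousOn_fderiv_of_isOpen hV le_rfl
  obtain ⟨K, hK⟩ := hsc.exists_bound_of_continuousOn (hcont.mono hsV)
  have hK0 : 0 ≤ max K 0 := le_max_right _ _
  refine ⟨max K 0, hK0, fun x hx y hy => ?_⟩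
  exact hs.norm_image_sub_le_of_norm_hasFDerivWithin_le
    (f' := fun x => fderiv ℝ f x)
    (fun z hz => ((hf.differentiableOn one_ne_zero).differentiableAt
        (hV.mem_nhds (hsV hz))).hasFDerivAt.hasFDerivWithinAt)
    (fun z hz => le_max_of_le_left (hK z hz)) hy hx

private lemma lowtrans {p : ℕ} (nB : ℝ) (hnB : 0 < nB) (A L : (Fin p → ℝ) →L[ℝ] (Fin p → ℝ))
    (hlow : ∀ x : Fin p → ℝ, ‖x‖ ≤ nB * ‖A x‖)
    (hnear : ‖L - A‖ ≤ (2 * nB)⁻¹) (x : Fin p → ℝ) :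
    ‖x‖ ≤ (2 * nB) * ‖L x‖ := by
  have h1 : ‖x‖ ≤ nB * ‖A x‖ := hlow x
  have h2 : ‖A x - L x‖ ≤ (2 * nB)⁻¹ * ‖x‖ := by
    have e : A x - L x = (A - L) x := by simp
    rw [e]
    calc ‖(A - L) x‖ ≤ ‖A - L‖ * ‖x‖ := (A - L).le_opNorm x
    _ ≤ (2 * nB)⁻¹ * ‖x‖ := by
        apply mul_le_mul_of_nonneg_right _ (norm_nonneg x)
        rw [norm_sub_rev]; exact hnear
  have h3 : ‖A x‖ ≤ ‖L x‖ + ‖A x - L x‖ := by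
    have := norm_add_le (L x) (A x - L x)
    simpa using this
  have h4 : nB * ((2 * nB)⁻¹ * ‖x‖) = ‖x‖ / 2 := by
    field_simp
  nlinarith [norm_nonneg (L x), norm_nonneg x, norm_nonneg (A x)]

private def ThF {p d : ℕ} (G : (Fin d → ℝ) → ℝ → ℝ → (Fin p → ℝ)) :
    ((Fin d → ℝ) × ℝ × ℝ) → (Fin p → ℝ) := fun q => G q.1 q.2.1 q.2.2

private def PhiF {p d : ℕ} (a b c : (Fin p → ℝ) → (Fin d → ℝ) → (Fin p → ℝ))
    (h : (Fin p → ℝ) → (Fin d → ℝ) → ℝ → (Fin p → ℝ)) :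
    (Fin p → ℝ) × ((Fin d → ℝ) × ℝ × ℝ) → (Fin p → ℝ) := fun z =>
  a z.1 z.2.1 + z.2.2.1 • b z.1 z.2.1 +
    z.2.2.1 • (z.2.2.2 • c z.1 z.2.1 + h z.1 z.2.1 z.2.2.2)

private noncomputable def WF {p d : ℕ} (G : (Fin d → ℝ) → ℝ → ℝ → (Fin p → ℝ))
    (q : (Fin d → ℝ) × ℝ × ℝ) : Fin p → ℝ :=
  fderiv ℝ (ThF G) q ((0, 0, 1) : (Fin d → ℝ) × ℝ × ℝ)

private noncomputable def hPF {p d : ℕ} (h : (Fin p → ℝ) → (Fin d → ℝ) → ℝ → (Fin p → ℝ))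
    (θ : Fin p → ℝ) (u' : Fin d → ℝ) (ρ : ℝ) : Fin p → ℝ :=
  fderiv ℝ (fun z : (Fin p → ℝ) × (Fin d → ℝ) × ℝ => h z.1 z.2.1 z.2.2) (θ, u', ρ) (0, 0, 1)

private noncomputable def vF {p d : ℕ} (c : (Fin p → ℝ) → (Fin d → ℝ) → (Fin p → ℝ))
    (h : (Fin p → ℝ) → (Fin d → ℝ) → ℝ → (Fin p → ℝ))
    (G : (Fin d → ℝ) → ℝ → ℝ → (Fin p → ℝ)) (q : (Fin d → ℝ) × ℝ × ℝ) : Fin p → ℝ :=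
  c (ThF G q) q.1 + hPF h (ThF G q) q.1 q.2.2

private noncomputable def MF {p d : ℕ} (a b c : (Fin p → ℝ) → (Fin d → ℝ) → (Fin p → ℝ))
    (h : (Fin p → ℝ) → (Fin d → ℝ) → ℝ → (Fin p → ℝ))
    (G : (Fin d → ℝ) → ℝ → ℝ → (Fin p → ℝ)) (q : (Fin d → ℝ) × ℝ × ℝ) :
    (Fin p → ℝ) →L[ℝ] (Fin p → ℝ) :=
  (fderiv ℝ (PhiF a b c h) (ThF G q, q)).comp
    ((ContinuousLinearMap.id ℝ (Fin p → ℝ)).prod 0)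

section core

variable {p d : ℕ}
  {a b c : (Fin p → ℝ) → (Fin d → ℝ) → (Fin p → ℝ)}
  {h : (Fin p → ℝ) → (Fin d → ℝ) → ℝ → (Fin p → ℝ)}
  {G : (Fin d → ℝ) → ℝ → ℝ → (Fin p → ℝ)}
  {V : Set ((Fin d → ℝ) × ℝ × ℝ)}

private lemma hPhiSmooth
    (ha : ContDiff ℝ 2 (fun q : (Fin p → ℝ) × (Fin d → ℝ) => a q.1 q.2))
    (hb : ContDiff ℝ 2 (fun q : (Fin p → ℝ) × (Fin d → ℝ) => b q.1 q.2))
    (hc : ContDiff ℝ 2 (fun q : (Fin p → ℝ) × (Fin d → ℝ) => c q.1 q.2))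
    (hh : ContDiff ℝ 2 (fun q : (Fin p → ℝ) × (Fin d → ℝ) × ℝ => h q.1 q.2.1 q.2.2)) :
    ContDiff ℝ 2 (PhiF a b c h) := by
  have hεz : ContDiff ℝ 2 (fun z : (Fin p → ℝ) × ((Fin d → ℝ) × ℝ × ℝ) => z.2.2.1) :=
    contDiff_fst.comp (contDiff_snd.comp contDiff_snd)
  have hρz : ContDiff ℝ 2 (fun z : (Fin p → ℝ) × ((Fin d → ℝ) × ℝ × ℝ) => z.2.2.2) :=
    contDiff_snd.comp (contDiff_snd.comp contDiff_snd)
  have hA : ContDiff ℝ 2 (fun z : (Fin p → ℝ) × ((Fin d → ℝ) × ℝ × ℝ) => a z.1 z.2.1) :=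
    ha.comp (contDiff_fst.prodMk (contDiff_fst.comp contDiff_snd))
  have hB : ContDiff ℝ 2 (fun z : (Fin p → ℝ) × ((Fin d → ℝ) × ℝ × ℝ) => b z.1 z.2.1) :=
    hb.comp (contDiff_fst.prodMk (contDiff_fst.comp contDiff_snd))
  have hC : ContDiff ℝ 2 (fun z : (Fin p → ℝ) × ((Fin d → ℝ) × ℝ × ℝ) => c z.1 z.2.1) :=
    hc.comp (contDiff_fst.prodMk (contDiff_fst.comp contDiff_snd))
  have hHz : ContDiff ℝ 2
      (fun z : (Fin p → ℝ) × ((Fin d → ℝ) × ℝ × ℝ) => h z.1 z.2.1 z.2.2.2) :=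
    hh.comp (contDiff_fst.prodMk ((contDiff_fst.comp contDiff_snd).prodMk hρz))
  exact (hA.add (hεz.smul hB)).add (hεz.smul ((hρz.smul hC).add hHz))

private lemma hHcurve
    (hh : ContDiff ℝ 2 (fun q : (Fin p → ℝ) × (Fin d → ℝ) × ℝ => h q.1 q.2.1 q.2.2))
    (θ : Fin p → ℝ) (u' : Fin d → ℝ) (ρ : ℝ) :
    HasDerivAt (fun s => h θ u' s) (hPF h θ u' ρ) ρ := by
  have hγ : HasDerivAt (fun s : ℝ => ((θ, u', s) : (Fin p → ℝ) × (Fin d → ℝ) × ℝ))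
      ((0, 0, 1) : (Fin p → ℝ) × (Fin d → ℝ) × ℝ) ρ :=
    (hasDerivAt_const ρ θ).prodMk ((hasDerivAt_const ρ u').prodMk (hasDerivAt_id ρ))
  exact ((hh.differentiable two_ne_zero) _).hasFDerivAt.comp_hasDerivAt ρ hγ

private lemma hThdiff (hVopen : IsOpen V)
    (hG : ContDiffOn ℝ 2 (fun q : (Fin d → ℝ) × ℝ × ℝ => G q.1 q.2.1 q.2.2) V) :
    ∀ q ∈ V, DifferentiableAt ℝ (ThF G) q := fun q hq =>
  ((hG.of_le one_le_two).differentiableOn one_ne_zero).differentiableAt (hVopen.mem_nhds hq)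

private lemma hcurveTh (hVopen : IsOpen V)
    (hG : ContDiffOn ℝ 2 (fun q : (Fin d → ℝ) × ℝ × ℝ => G q.1 q.2.1 q.2.2) V)
    (u' : Fin d → ℝ) (ε ρ : ℝ) (hq : ((u', ε, ρ) : (Fin d → ℝ) × ℝ × ℝ) ∈ V) :
    HasDerivAt (fun s => G u' ε s) (WF G (u', ε, ρ)) ρ := by
  have hγ : HasDerivAt (fun s : ℝ => ((u', ε, s) : (Fin d → ℝ) × ℝ × ℝ))
      ((0, 0, 1) : (Fin d → ℝ) × ℝ × ℝ) ρ :=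
    (hasDerivAt_const ρ u').prodMk ((hasDerivAt_const ρ ε).prodMk (hasDerivAt_id ρ))
  exact (hThdiff hVopen hG _ hq).hasFDerivAt.comp_hasDerivAt ρ hγ

private lemma hMWkey (hVopen : IsOpen V)
    (ha : ContDiff ℝ 2 (fun q : (Fin p → ℝ) × (Fin d → ℝ) => a q.1 q.2))
    (hb : ContDiff ℝ 2 (fun q : (Fin p → ℝ) × (Fin d → ℝ) => b q.1 q.2))
    (hc : ContDiff ℝ 2 (fun q : (Fin p → ℝ) × (Fin d → ℝ) => c q.1 q.2))
    (hh : ContDiff ℝ 2 (fun q : (Fin p → ℝ) × (Fin d → ℝ) × ℝ => h q.1 q.2.1 q.2.2))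
    (hG : ContDiffOn ℝ 2 (fun q : (Fin d → ℝ) × ℝ × ℝ => G q.1 q.2.1 q.2.2) V)
    (hΦΘ : ∀ q ∈ V, PhiF a b c h (ThF G q, q) = 0)
    (u' : Fin d → ℝ) (ε ρ : ℝ) (hq : ((u', ε, ρ) : (Fin d → ℝ) × ℝ × ℝ) ∈ V) :
    MF a b c h G (u', ε, ρ) (WF G (u', ε, ρ)) = -(ε • vF c h G (u', ε, ρ)) := by
  have hΦ1 : Differentiable ℝ (PhiF a b c h) :=
    (hPhiSmooth ha hb hc hh).differentiable two_ne_zero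
  have hγ : HasDerivAt (fun s : ℝ => ((u', ε, s) : (Fin d → ℝ) × ℝ × ℝ))
      ((0, 0, 1) : (Fin d → ℝ) × ℝ × ℝ) ρ :=
    (hasDerivAt_const ρ u').prodMk ((hasDerivAt_const ρ ε).prodMk (hasDerivAt_id ρ))
  have hΘγ : HasDerivAt (fun s : ℝ => ThF G (u', ε, s)) (WF G (u', ε, ρ)) ρ := by
    have := (hThdiff hVopen hG _ hq).hasFDerivAt.comp_hasDerivAt ρ hγ; exact this
  have hzc : HasDerivAt
      (fun s : ℝ => ((ThF G (u', ε, s), ((u', ε, s) : (Fin d → ℝ) × ℝ × ℝ)) :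
        (Fin p → ℝ) × ((Fin d → ℝ) × ℝ × ℝ)))
      ((WF G (u', ε, ρ), ((0, 0, 1) : (Fin d → ℝ) × ℝ × ℝ))) ρ := hΘγ.prodMk hγ
  have hcomp : HasDerivAt (fun s : ℝ => PhiF a b c h (ThF G (u', ε, s), (u', ε, s)))
      (fderiv ℝ (PhiF a b c h) (ThF G (u', ε, ρ), (u', ε, ρ))
        (WF G (u', ε, ρ), ((0, 0, 1) : (Fin d → ℝ) × ℝ × ℝ))) ρ :=
    (hΦ1 _).hasFDerivAt.comp_hasDerivAt ρ hzc
  have hopen : IsOpen {s : ℝ | ((u', ε, s) : (Fin d → ℝ) × ℝ × ℝ) ∈ V} :=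
    hVopen.preimage (continuous_const.prodMk (continuous_const.prodMk continuous_id))
  have hev : (fun s : ℝ => PhiF a b c h (ThF G (u', ε, s), ((u', ε, s) :
      (Fin d → ℝ) × ℝ × ℝ))) =ᶠ[nhds ρ] fun _ => 0 := by
    filter_upwards [hopen.mem_nhds hq] with s hs
    exact hΦΘ _ hs
  have hzero : fderiv ℝ (PhiF a b c h) (ThF G (u', ε, ρ), (u', ε, ρ))
      (WF G (u', ε, ρ), ((0, 0, 1) : (Fin d → ℝ) × ℝ × ℝ)) = 0 :=
    (hcomp.congr_of_eventuallyEq hev.symm).unique (hasDerivAt_const ρ 0)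
  have hsplit : ((WF G (u', ε, ρ), ((0, 0, 1) : (Fin d → ℝ) × ℝ × ℝ)) :
      (Fin p → ℝ) × ((Fin d → ℝ) × ℝ × ℝ))
      = (WF G (u', ε, ρ), (0 : (Fin d → ℝ) × ℝ × ℝ))
        + ((0 : Fin p → ℝ), ((0, 0, 1) : (Fin d → ℝ) × ℝ × ℝ)) := by
    simp [Prod.ext_iff]
  have hγ2 : HasDerivAt
      (fun s : ℝ => ((ThF G (u', ε, ρ), ((u', ε, s) : (Fin d → ℝ) × ℝ × ℝ)) :
        (Fin p → ℝ) × ((Fin d → ℝ) × ℝ × ℝ)))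
      (((0 : Fin p → ℝ), ((0, 0, 1) : (Fin d → ℝ) × ℝ × ℝ))) ρ :=
    (hasDerivAt_const ρ (ThF G (u', ε, ρ))).prodMk hγ
  have hcomp2 : HasDerivAt (fun s : ℝ => PhiF a b c h (ThF G (u', ε, ρ), (u', ε, s)))
      (fderiv ℝ (PhiF a b c h) (ThF G (u', ε, ρ), (u', ε, ρ))
        ((0 : Fin p → ℝ), ((0, 0, 1) : (Fin d → ℝ) × ℝ × ℝ))) ρ :=
    (hΦ1 _).hasFDerivAt.comp_hasDerivAt ρ hγ2
  have hdirect : HasDerivAt (fun s : ℝ => PhiF a b c h (ThF G (u', ε, ρ), (u', ε, s)))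
      (ε • vF c h G (u', ε, ρ)) ρ := by
    have h1 : HasDerivAt
        (fun s : ℝ => s • c (ThF G (u', ε, ρ)) u' + h (ThF G (u', ε, ρ)) u' s)
        (c (ThF G (u', ε, ρ)) u' + hPF h (ThF G (u', ε, ρ)) u' ρ) ρ := by
      have h2 := (hasDerivAt_id ρ).smul_const (c (ThF G (u', ε, ρ)) u')
      simpa only [id_eq, one_smul, Pi.add_def] using h2.add (hHcurve hh (ThF G (u', ε, ρ)) u' ρ)
    have h3 := (hasDerivAt_const ρ
      (a (ThF G (u', ε, ρ)) u' + ε • b (ThF G (u', ε, ρ)) u')).add (h1.const_smul ε)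
    have h4 : (fun s : ℝ => PhiF a b c h (ThF G (u', ε, ρ), (u', ε, s)))
        = fun s : ℝ => a (ThF G (u', ε, ρ)) u' + ε • b (ThF G (u', ε, ρ)) u'
          + ε • (s • c (ThF G (u', ε, ρ)) u' + h (ThF G (u', ε, ρ)) u' s) := rfl
    rw [h4]
    have h5 : ε • vF c h G (u', ε, ρ)
        = 0 + ε • (c (ThF G (u', ε, ρ)) u' + hPF h (ThF G (u', ε, ρ)) u' ρ) := by
      rw [zero_add]; rfl
    rw [h5]
    exact h3
  have hval2 : fderiv ℝ (PhiF a b c h) (ThF G (u', ε, ρ), (u', ε, ρ))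
      ((0 : Fin p → ℝ), ((0, 0, 1) : (Fin d → ℝ) × ℝ × ℝ))
      = ε • vF c h G (u', ε, ρ) := hcomp2.unique hdirect
  have e1 : MF a b c h G (u', ε, ρ) (WF G (u', ε, ρ))
      = fderiv ℝ (PhiF a b c h) (ThF G (u', ε, ρ), (u', ε, ρ))
        (WF G (u', ε, ρ), (0 : (Fin d → ℝ) × ℝ × ℝ)) := by
    simp [MF]
  have hadd : fderiv ℝ (PhiF a b c h) (ThF G (u', ε, ρ), (u', ε, ρ))
      (WF G (u', ε, ρ), (0 : (Fin d → ℝ) × ℝ × ℝ)) + ε • vF c h G (u', ε, ρ) = 0 := by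
    rw [← hval2, ← map_add, ← hsplit, hzero]
  rw [e1]
  exact eq_neg_of_add_eq_zero_left hadd

private lemma hWFcont (hVopen : IsOpen V)
    (hG : ContDiffOn ℝ 2 (fun q : (Fin d → ℝ) × ℝ × ℝ => G q.1 q.2.1 q.2.2) V) :
    ContinuousOn (WF G) V :=
  ((hG.continuousOn_fderiv_of_isOpen hVopen one_le_two).clm_apply continuousOn_const :)

private lemma hvFC1 (hVopen : IsOpen V)
    (hc : ContDiff ℝ 2 (fun q : (Fin p → ℝ) × (Fin d → ℝ) => c q.1 q.2))
    (hh : ContDiff ℝ 2 (fun q : (Fin p → ℝ) × (Fin d → ℝ) × ℝ => h q.1 q.2.1 q.2.2))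
    (hG : ContDiffOn ℝ 2 (fun q : (Fin d → ℝ) × ℝ × ℝ => G q.1 q.2.1 q.2.2) V) :
    ContDiffOn ℝ 1 (vF c h G) V := by
  have hΘ1 : ContDiffOn ℝ 1 (ThF G) V := hG.of_le one_le_two
  have t1 : ContDiffOn ℝ 1 (fun q : (Fin d → ℝ) × ℝ × ℝ => c (ThF G q) q.1) V :=
    (hc.of_le one_le_two).comp_contDiffOn (hΘ1.prodMk contDiff_fst.contDiffOn)
  have hfd : ContDiff ℝ 1
      (fderiv ℝ (fun z : (Fin p → ℝ) × (Fin d → ℝ) × ℝ => h z.1 z.2.1 z.2.2)) :=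
    hh.fderiv_right (by norm_num)
  have hmap : ContDiffOn ℝ 1 (fun q : (Fin d → ℝ) × ℝ × ℝ =>
      ((ThF G q, q.1, q.2.2) : (Fin p → ℝ) × (Fin d → ℝ) × ℝ)) V :=
    hΘ1.prodMk (contDiff_fst.contDiffOn.prodMk (contDiff_snd.comp contDiff_snd).contDiffOn)
  exact t1.add ((hfd.comp_contDiffOn hmap).clm_apply contDiffOn_const)

private lemma hMFC1 (hVopen : IsOpen V)
    (ha : ContDiff ℝ 2 (fun q : (Fin p → ℝ) × (Fin d → ℝ) => a q.1 q.2))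
    (hb : ContDiff ℝ 2 (fun q : (Fin p → ℝ) × (Fin d → ℝ) => b q.1 q.2))
    (hc : ContDiff ℝ 2 (fun q : (Fin p → ℝ) × (Fin d → ℝ) => c q.1 q.2))
    (hh : ContDiff ℝ 2 (fun q : (Fin p → ℝ) × (Fin d → ℝ) × ℝ => h q.1 q.2.1 q.2.2))
    (hG : ContDiffOn ℝ 2 (fun q : (Fin d → ℝ) × ℝ × ℝ => G q.1 q.2.1 q.2.2) V) :
    ContDiffOn ℝ 1 (MF a b c h G) V := by
  have hfd : ContDiff ℝ 1 (fderiv ℝ (PhiF a b c h)) :=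
    (hPhiSmooth ha hb hc hh).fderiv_right (by norm_num)
  have hmap : ContDiffOn ℝ 1 (fun q : (Fin d → ℝ) × ℝ × ℝ =>
      ((ThF G q, q) : (Fin p → ℝ) × ((Fin d → ℝ) × ℝ × ℝ))) V :=
    (hG.of_le one_le_two).prodMk contDiffOn_id
  exact ContDiffOn.clm_comp (hfd.comp_contDiffOn hmap) contDiffOn_const

private lemma hMF0 {θ₀ : Fin p → ℝ} {u₀ : Fin d → ℝ} {Ja : Matrix (Fin p) (Fin p) ℝ}
    (ha : ContDiff ℝ 2 (fun q : (Fin p → ℝ) × (Fin d → ℝ) => a q.1 q.2))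
    (hb : ContDiff ℝ 2 (fun q : (Fin p → ℝ) × (Fin d → ℝ) => b q.1 q.2))
    (hc : ContDiff ℝ 2 (fun q : (Fin p → ℝ) × (Fin d → ℝ) => c q.1 q.2))
    (hh : ContDiff ℝ 2 (fun q : (Fin p → ℝ) × (Fin d → ℝ) × ℝ => h q.1 q.2.1 q.2.2))
    (hG0 : G u₀ 0 0 = θ₀)
    (hJa : ∀ i j, Ja i j = fderiv ℝ (fun θ => a θ u₀ i) θ₀ (Pi.single j 1)) :
    ∀ x : Fin p → ℝ, MF a b c h G ((u₀, 0, 0) : (Fin d → ℝ) × ℝ × ℝ) x = Ja.mulVec x := by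
  have hΦ1 : Differentiable ℝ (PhiF a b c h) :=
    (hPhiSmooth ha hb hc hh).differentiable two_ne_zero
  have hTh0 : ThF G ((u₀, 0, 0) : (Fin d → ℝ) × ℝ × ℝ) = θ₀ := hG0
  have h1 : HasFDerivAt
      (fun θ : Fin p → ℝ => PhiF a b c h (θ, ((u₀, 0, 0) : (Fin d → ℝ) × ℝ × ℝ)))
      (MF a b c h G ((u₀, 0, 0) : (Fin d → ℝ) × ℝ × ℝ)) θ₀ := by
    have h2 := ((hΦ1 _).hasFDerivAt).comp θ₀
      ((hasFDerivAt_id θ₀).prodMk (hasFDerivAt_const ((u₀, 0, 0) : (Fin d → ℝ) × ℝ × ℝ) θ₀))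
    have h3 : MF a b c h G ((u₀, 0, 0) : (Fin d → ℝ) × ℝ × ℝ)
        = (fderiv ℝ (PhiF a b c h) (θ₀, ((u₀, 0, 0) : (Fin d → ℝ) × ℝ × ℝ))).comp
          ((ContinuousLinearMap.id ℝ (Fin p → ℝ)).prod 0) := by
      rw [MF, hTh0]
    rw [h3]
    exact h2
  have h4 : (fun θ : Fin p → ℝ => PhiF a b c h (θ, ((u₀, 0, 0) : (Fin d → ℝ) × ℝ × ℝ)))
      = fun θ => a θ u₀ := by
    funext θ; simp [PhiF]
  rw [h4] at h1
  have h5 : fderiv ℝ (fun θ : Fin p → ℝ => a θ u₀) θ₀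
      = MF a b c h G ((u₀, 0, 0) : (Fin d → ℝ) × ℝ × ℝ) := h1.fderiv
  intro x
  rw [← h5]
  have haU : ContDiff ℝ 2 (fun θ : Fin p → ℝ => a θ u₀) :=
    ha.comp (contDiff_id.prodMk contDiff_const)
  have hdi : ∀ i, DifferentiableAt ℝ (fun θ : Fin p → ℝ => a θ u₀ i) θ₀ := fun i =>
    ((ContinuousLinearMap.proj i (R := ℝ) (φ := fun _ : Fin p => ℝ)).differentiableAt).comp θ₀
      ((haU.differentiable two_ne_zero) θ₀)
  have hpi : fderiv ℝ (fun θ : Fin p → ℝ => a θ u₀) θ₀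
      = ContinuousLinearMap.pi (fun i => fderiv ℝ (fun θ : Fin p → ℝ => a θ u₀ i) θ₀) :=
    fderiv_pi hdi
  have hx : ∑ j : Fin p, x j • (Pi.single j 1 : Fin p → ℝ) = x := by
    have h2 : ∀ j : Fin p, x j • (Pi.single j 1 : Fin p → ℝ) = Pi.single j (x j) :=
      fun j => by rw [← Pi.single_smul, smul_eq_mul, mul_one]
    simp_rw [h2]
    exact Finset.univ_sum_single x
  funext i
  rw [hpi]
  simp only [ContinuousLinearMap.pi_apply]
  conv_lhs => rw [← hx]
  rw [_root_.map_sum]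
  simp only [_root_.map_smul]
  simp only [← hJa]
  simp [Matrix.mulVec, dotProduct, smul_eq_mul, mul_comm]

end core

/-- the true discrepancy `δ_n = G(u_n,1/n,1/n) − G(u_n,1/n,0)` and
its approximation `δ̂_n = (1/n)∂G/∂ρ(u_n,1/n,0)` differ by `O(n⁻³)`. -/
theorem stmt9 (p d : ℕ) (hp : 0 < p) (hd : 0 < d)
    (θ₀ : Fin p → ℝ) (u₀ : Fin d → ℝ)
    (a b c : (Fin p → ℝ) → (Fin d → ℝ) → (Fin p → ℝ))
    (ha : ContDiff ℝ 2 (fun q : (Fin p → ℝ) × (Fin d → ℝ) => a q.1 q.2))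
    (hb : ContDiff ℝ 2 (fun q : (Fin p → ℝ) × (Fin d → ℝ) => b q.1 q.2))
    (hc : ContDiff ℝ 2 (fun q : (Fin p → ℝ) × (Fin d → ℝ) => c q.1 q.2))
    (h : (Fin p → ℝ) → (Fin d → ℝ) → ℝ → (Fin p → ℝ))
    (hh : ContDiff ℝ 2 (fun q : (Fin p → ℝ) × (Fin d → ℝ) × ℝ => h q.1 q.2.1 q.2.2))
    (hh0 : ∀ θ u, h θ u 0 = 0)
    (hhρ : ∀ θ u, deriv (fun ρ => h θ u ρ) 0 = 0)
    (F : (Fin p → ℝ) → (Fin d → ℝ) → ℝ → ℝ → (Fin p → ℝ))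
    (hF : ∀ θ u ε ρ, F θ u ε ρ = a θ u + ε • b θ u + ε • (ρ • c θ u + h θ u ρ))
    (ha0 : a θ₀ u₀ = 0)
    (Ja : Matrix (Fin p) (Fin p) ℝ)
    (hJa : ∀ i j, Ja i j = fderiv ℝ (fun θ => a θ u₀ i) θ₀ (Pi.single j 1))
    (hJaInv : IsUnit Ja.det)
    (G : (Fin d → ℝ) → ℝ → ℝ → (Fin p → ℝ))
    (V : Set ((Fin d → ℝ) × ℝ × ℝ)) (hVopen : IsOpen V)
    (hV : ((u₀, 0, 0) : (Fin d → ℝ) × ℝ × ℝ) ∈ V)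
    (hG : ContDiffOn ℝ 2 (fun q : (Fin d → ℝ) × ℝ × ℝ => G q.1 q.2.1 q.2.2) V)
    (hG0 : G u₀ 0 0 = θ₀)
    (hFG : ∀ q ∈ V, F (G q.1 q.2.1 q.2.2) q.1 q.2.1 q.2.2 = 0)
    (u : ℕ → Fin d → ℝ) (hu : Tendsto u atTop (nhds u₀))
    (δ : ℕ → Fin p → ℝ)
    (hδ : ∀ n : ℕ, δ n = G (u n) ((n:ℝ)⁻¹) ((n:ℝ)⁻¹) - G (u n) ((n:ℝ)⁻¹) 0)
    (δhat : ℕ → Fin p → ℝ)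
    (hδhat : ∀ n : ℕ,
      δhat n = ((n:ℝ)⁻¹) • deriv (fun ρ => G (u n) ((n:ℝ)⁻¹) ρ) 0) :
    ∃ C > (0:ℝ), ∀ᶠ n : ℕ in atTop, ‖δ n - δhat n‖ ≤ C * ((n:ℝ)^3)⁻¹ := by
  classical
  have hΦΘ : ∀ q ∈ V, PhiF a b c h (ThF G q, q) = 0 := by
    intro q hq
    have h1 := hFG q hq
    rw [hF] at h1
    exact h1
  -- the invertible operator at the base point
  obtain ⟨nB, hnB, hlowA⟩ : ∃ nB : ℝ, 0 < nB ∧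
      ∀ x : Fin p → ℝ, ‖x‖ ≤ nB * ‖MF a b c h G ((u₀, 0, 0) : (Fin d → ℝ) × ℝ × ℝ) x‖ := by
    have hAmul := hMF0 ha hb hc hh hG0 hJa
    set B : (Fin p → ℝ) →L[ℝ] (Fin p → ℝ) :=
      LinearMap.toContinuousLinearMap ((Ja⁻¹).mulVecLin) with hBdef
    set A := MF a b c h G ((u₀, 0, 0) : (Fin d → ℝ) × ℝ × ℝ) with hAdef
    have hBA : ∀ x : Fin p → ℝ, B (A x) = x := by
      intro x
      have h1 : B (A x) = (Ja⁻¹).mulVec (Ja.mulVec x) := by rw [hAmul]; rfl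
      rw [h1, Matrix.mulVec_mulVec, Matrix.nonsing_inv_mul Ja hJaInv, Matrix.one_mulVec]
    have hlow : ∀ x : Fin p → ℝ, ‖x‖ ≤ ‖B‖ * ‖A x‖ := by
      intro x
      calc ‖x‖ = ‖B (A x)‖ := by rw [hBA]
      _ ≤ ‖B‖ * ‖A x‖ := B.le_opNorm _
    refine ⟨‖B‖, ?_, hlow⟩
    by_contra hcon
    push_neg at hcon
    have hB0 : ‖B‖ = 0 := le_antisymm hcon (norm_nonneg _)
    have h2 := hlow (Pi.single ⟨0, hp⟩ 1)
    rw [hB0, zero_mul] at h2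
    have h3 : (Pi.single (⟨0, hp⟩ : Fin p) (1:ℝ) : Fin p → ℝ) = 0 := norm_le_zero_iff.mp h2
    have h4 := congrFun h3 ⟨0, hp⟩
    simp [Pi.single_eq_same] at h4
  set A := MF a b c h G ((u₀, 0, 0) : (Fin d → ℝ) × ℝ × ℝ) with hAdef
  -- regularity
  have hMC1 := hMFC1 hVopen ha hb hc hh hG
  have hvC1 := hvFC1 hVopen hc hh hG
  -- find a good closed ball around the base point
  have hMcA : ContinuousAt (MF a b c h G) ((u₀, 0, 0) : (Fin d → ℝ) × ℝ × ℝ) :=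
    hMC1.continuousOn.continuousAt (hVopen.mem_nhds hV)
  have hballA : Metric.ball A ((2 * nB)⁻¹) ∈ nhds A :=
    Metric.ball_mem_nhds _ (by positivity)
  have hpre : (MF a b c h G) ⁻¹' (Metric.ball A ((2 * nB)⁻¹)) ∩ V
      ∈ nhds ((u₀, 0, 0) : (Fin d → ℝ) × ℝ × ℝ) :=
    Filter.inter_mem (hMcA.preimage_mem_nhds hballA) (hVopen.mem_nhds hV)
  obtain ⟨r₀, hr₀, hball⟩ := Metric.mem_nhds_iff.mp hpre
  set r := r₀ / 2 with hrdef
  have hr : 0 < r := by positivity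
  set S := Metric.closedBall ((u₀, 0, 0) : (Fin d → ℝ) × ℝ × ℝ) r with hSdef
  have hSsub : S ⊆ (MF a b c h G) ⁻¹' (Metric.ball A ((2 * nB)⁻¹)) ∩ V := by
    refine subset_trans ?_ hball
    rw [hSdef]
    exact (Metric.closedBall_subset_ball (by linarith))
  have hSV : S ⊆ V := fun q hq => (hSsub hq).2
  have hSnear : ∀ q ∈ S, ‖MF a b c h G q - A‖ ≤ (2 * nB)⁻¹ := by
    intro q hq
    have := (hSsub hq).1
    rw [Set.mem_preimage, Metric.mem_ball, dist_eq_norm] at this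
    exact this.le
  have hSlow : ∀ q ∈ S, ∀ x : Fin p → ℝ, ‖x‖ ≤ (2 * nB) * ‖MF a b c h G q x‖ :=
    fun q hq x => lowtrans nB hnB A (MF a b c h G q) hlowA (hSnear q hq) x
  -- Lipschitz constants on S
  obtain ⟨LM, hLM0, hLM⟩ := lip_of_cdOn hVopen hMC1 (convex_closedBall _ _)
    (isCompact_closedBall _ _) hSV
  obtain ⟨Lv, hLv0, hLv⟩ := lip_of_cdOn hVopen hvC1 (convex_closedBall _ _)
    (isCompact_closedBall _ _) hSV
  -- bound for v on S
  set x₀ : (Fin d → ℝ) × ℝ × ℝ := (u₀, 0, 0) with hx₀def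
  have hx₀S : x₀ ∈ S := Metric.mem_closedBall_self hr.le
  set Bv := ‖vF c h G x₀‖ + Lv * r with hBvdef
  have hBv0 : 0 ≤ Bv := by positivity
  have hBv : ∀ q ∈ S, ‖vF c h G q‖ ≤ Bv := by
    intro q hq
    have h1 : ‖vF c h G q - vF c h G x₀‖ ≤ Lv * ‖q - x₀‖ := hLv q hq x₀ hx₀S
    have h2 : ‖q - x₀‖ ≤ r := by
      rw [← dist_eq_norm]
      exact Metric.mem_closedBall.mp hq
    have h3 : ‖vF c h G q‖ ≤ ‖vF c h G x₀‖ + ‖vF c h G q - vF c h G x₀‖ := by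
      have := norm_add_le (vF c h G x₀) (vF c h G q - vF c h G x₀)
      simpa using this
    have h4 : Lv * ‖q - x₀‖ ≤ Lv * r := mul_le_mul_of_nonneg_left h2 hLv0
    rw [hBvdef]
    linarith
  -- the constant
  set C₁ := 2 * nB * (Lv + 2 * nB * LM * Bv) with hC₁def
  have hC₁0 : 0 ≤ C₁ := by positivity
  -- pointwise estimate on the ρ-derivative
  have hWest : ∀ (u' : Fin d → ℝ) (ε s' : ℝ), 0 ≤ ε → 0 ≤ s' →
      ((u', ε, 0) : (Fin d → ℝ) × ℝ × ℝ) ∈ S → ((u', ε, s') : (Fin d → ℝ) × ℝ × ℝ) ∈ S →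
      ‖WF G (u', ε, s') - WF G (u', ε, 0)‖ ≤ C₁ * (ε * s') := by
    intro u' ε s' hε hs' hq0 hqs
    have h1 := hMWkey hVopen ha hb hc hh hG hΦΘ u' ε s' (hSV hqs)
    have h2 := hMWkey hVopen ha hb hc hh hG hΦΘ u' ε 0 (hSV hq0)
    have hdiff : ((u', ε, s') : (Fin d → ℝ) × ℝ × ℝ) - ((u', ε, 0) : (Fin d → ℝ) × ℝ × ℝ)
        = ((0, 0, s') : (Fin d → ℝ) × ℝ × ℝ) := by
      simp [Prod.ext_iff]
    have hnorms : ‖((u', ε, s') : (Fin d → ℝ) × ℝ × ℝ) - ((u', ε, 0) :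
        (Fin d → ℝ) × ℝ × ℝ)‖ = s' := by
      rw [hdiff]
      simp only [Prod.norm_def, norm_zero, Real.norm_eq_abs, abs_of_nonneg hs']
      rw [max_eq_right hs', max_eq_right hs']
    have hW0 : ‖WF G (u', ε, 0)‖ ≤ 2 * nB * (ε * Bv) := by
      have h3 := hSlow _ hq0 (WF G (u', ε, 0))
      rw [h2] at h3
      rw [norm_neg, norm_smul, Real.norm_eq_abs, abs_of_nonneg hε] at h3
      calc ‖WF G (u', ε, 0)‖ ≤ 2 * nB * (ε * ‖vF c h G (u', ε, 0)‖) := h3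
      _ ≤ 2 * nB * (ε * Bv) := by
          apply mul_le_mul_of_nonneg_left _ (by positivity)
          exact mul_le_mul_of_nonneg_left (hBv _ hq0) hε
    have hkey : MF a b c h G (u', ε, s') (WF G (u', ε, s') - WF G (u', ε, 0))
        = -(ε • (vF c h G (u', ε, s') - vF c h G (u', ε, 0)))
          - ((MF a b c h G (u', ε, s') - MF a b c h G (u', ε, 0)) (WF G (u', ε, 0))) := by
      simp only [map_sub, ContinuousLinearMap.sub_apply, h1, h2, smul_sub]
      abel
    have hvLip : ‖vF c h G (u', ε, s') - vF c h G (u', ε, 0)‖ ≤ Lv * s' := by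
      have := hLv _ hqs _ hq0
      rwa [hnorms] at this
    have hMLip : ‖MF a b c h G (u', ε, s') - MF a b c h G (u', ε, 0)‖ ≤ LM * s' := by
      have := hLM _ hqs _ hq0
      rwa [hnorms] at this
    calc ‖WF G (u', ε, s') - WF G (u', ε, 0)‖
        ≤ (2 * nB) * ‖MF a b c h G (u', ε, s') (WF G (u', ε, s') - WF G (u', ε, 0))‖ :=
          hSlow _ hqs _
    _ ≤ (2 * nB) * (ε * (Lv * s') + (LM * s') * (2 * nB * (ε * Bv))) := by
        apply mul_le_mul_of_nonneg_left _ (by positivity)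
        rw [hkey]
        have e : -(ε • (vF c h G (u', ε, s') - vF c h G (u', ε, 0)))
            - ((MF a b c h G (u', ε, s') - MF a b c h G (u', ε, 0)) (WF G (u', ε, 0)))
            = -((ε • (vF c h G (u', ε, s') - vF c h G (u', ε, 0)))
              + ((MF a b c h G (u', ε, s') - MF a b c h G (u', ε, 0)) (WF G (u', ε, 0)))) := by
          abel
        rw [e, norm_neg]
        have t1 : ‖ε • (vF c h G (u', ε, s') - vF c h G (u', ε, 0))‖ ≤ ε * (Lv * s') := by
          rw [norm_smul, Real.norm_eq_abs, abs_of_nonneg hε]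
          exact mul_le_mul_of_nonneg_left hvLip hε
        have t2 : ‖(MF a b c h G (u', ε, s') - MF a b c h G (u', ε, 0)) (WF G (u', ε, 0))‖
            ≤ (LM * s') * (2 * nB * (ε * Bv)) := by
          calc ‖(MF a b c h G (u', ε, s') - MF a b c h G (u', ε, 0)) (WF G (u', ε, 0))‖
              ≤ ‖MF a b c h G (u', ε, s') - MF a b c h G (u', ε, 0)‖ * ‖WF G (u', ε, 0)‖ :=
                ContinuousLinearMap.le_opNorm _ _
          _ ≤ (LM * s') * (2 * nB * (ε * Bv)) := by
              apply mul_le_mul hMLip hW0 (norm_nonneg _) (by positivity)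
        calc ‖_ + _‖ ≤ _ + _ := norm_add_le _ _
        _ ≤ ε * (Lv * s') + (LM * s') * (2 * nB * (ε * Bv)) := add_le_add t1 t2
    _ = C₁ * (ε * s') := by rw [hC₁def]; ring
  -- final assembly
  refine ⟨C₁ + 1, by positivity, ?_⟩
  have hucb : ∀ᶠ n in atTop, u n ∈ Metric.closedBall u₀ r :=
    hu (Metric.closedBall_mem_nhds u₀ hr)
  have hinvr : ∀ᶠ n : ℕ in atTop, (n:ℝ)⁻¹ ≤ r := by
    have ht : Tendsto (fun n : ℕ => (n:ℝ)⁻¹) atTop (nhds 0) :=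
      tendsto_inv_atTop_nhds_zero_nat
    exact ht.eventually (eventually_le_nhds hr)
  filter_upwards [hucb, hinvr] with n hn1 hn2
  set ε := (n:ℝ)⁻¹ with hεdef
  have hε0 : 0 ≤ ε := by positivity
  -- membership in the ball
  have hmem : ∀ s' : ℝ, 0 ≤ s' → s' ≤ ε →
      ((u n, ε, s') : (Fin d → ℝ) × ℝ × ℝ) ∈ S := by
    intro s' h1 h2
    rw [hSdef, Metric.mem_closedBall]
    have e1 : dist ((u n, ε, s') : (Fin d → ℝ) × ℝ × ℝ) x₀
        = max (dist (u n) u₀) (max (dist ε 0) (dist s' 0)) := by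
      rw [hx₀def, Prod.dist_eq, Prod.dist_eq]
    rw [e1]
    refine max_le (Metric.mem_closedBall.mp hn1) (max_le ?_ ?_)
    · rw [Real.dist_eq, sub_zero, abs_of_nonneg hε0]; exact hn2
    · rw [Real.dist_eq, sub_zero, abs_of_nonneg h1]; linarith
  -- FTC
  have hderivAll : ∀ s' ∈ Set.uIcc (0:ℝ) ε,
      HasDerivAt (fun ρ => G (u n) ε ρ) (WF G (u n, ε, s')) s' := by
    intro s' hs'
    rw [Set.uIcc_of_le hε0] at hs'
    exact hcurveTh hVopen hG (u n) ε s' (hSV (hmem s' hs'.1 hs'.2))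
  have hcontW : ContinuousOn (fun s' : ℝ => WF G (u n, ε, s')) (Set.uIcc (0:ℝ) ε) := by
    apply (hWFcont hVopen hG).comp
      (Continuous.continuousOn
        (continuous_const.prodMk (continuous_const.prodMk continuous_id)))
    intro s' hs'
    rw [Set.uIcc_of_le hε0] at hs'
    exact hSV (hmem s' hs'.1 hs'.2)
  have hint : IntervalIntegrable (fun s' : ℝ => WF G (u n, ε, s'))
      MeasureTheory.volume 0 ε := hcontW.intervalIntegrable
  have hFTC : ∫ s' in (0:ℝ)..ε, WF G (u n, ε, s') = G (u n) ε ε - G (u n) ε 0 :=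
    intervalIntegral.integral_eq_sub_of_hasDerivAt hderivAll hint
  have hderiv0 : deriv (fun ρ => G (u n) ε ρ) 0 = WF G (u n, ε, 0) :=
    (hcurveTh hVopen hG (u n) ε 0 (hSV (hmem 0 le_rfl hε0))).deriv
  have hconstint : ∫ _ in (0:ℝ)..ε, WF G (u n, ε, 0) = ε • WF G (u n, ε, 0) := by
    simp
  have hsub : δ n - δhat n
      = ∫ s' in (0:ℝ)..ε, (WF G (u n, ε, s') - WF G (u n, ε, 0)) := by
    rw [intervalIntegral.integral_sub hint intervalIntegrable_const, hFTC, hconstint,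
      hδ, hδhat, hderiv0]
  have hboundI : ‖δ n - δhat n‖ ≤ (C₁ * (ε * ε)) * |ε - 0| := by
    rw [hsub]
    apply intervalIntegral.norm_integral_le_of_norm_le_const
    intro s' hs'
    have hs'' : s' ∈ Set.Ioc 0 ε := by rwa [Set.uIoc_of_le hε0] at hs'
    calc ‖WF G (u n, ε, s') - WF G (u n, ε, 0)‖ ≤ C₁ * (ε * s') :=
      hWest (u n) ε s' hε0 hs''.1.le (hmem 0 le_rfl hε0) (hmem s' hs''.1.le hs''.2)
    _ ≤ C₁ * (ε * ε) := by
        apply mul_le_mul_of_nonneg_left _ hC₁0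
        exact mul_le_mul_of_nonneg_left hs''.2 hε0
  have habs : |ε - 0| = ε := by rw [sub_zero, abs_of_nonneg hε0]
  rw [habs] at hboundI
  have hεcube : ε * ε * ε = ((n:ℝ)^3)⁻¹ := by
    rw [hεdef, ← inv_pow]
    ring
  calc ‖δ n - δhat n‖ ≤ C₁ * (ε * ε) * ε := hboundI
  _ = C₁ * (ε * ε * ε) := by ring
  _ = C₁ * ((n:ℝ)^3)⁻¹ := by rw [hεcube]
  _ ≤ (C₁ + 1) * ((n:ℝ)^3)⁻¹ := by
      apply mul_le_mul_of_nonneg_right _ (by positivity)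
      linarith
end

section
/- Let p, d be positive integers, (θ₀, u₀) ∈ ℝ^p × ℝ^d. Let a, b, c : ℝ^p × ℝ^d → ℝ^p be twice continuously differentiable, and let h : ℝ^p × ℝ^d × ℝ → ℝ^p be twice continuously differentiable with h(θ, u, 0) = 0 and ∂h/∂ρ(θ, u, 0) = 0 for all (θ, u). Define F(θ, u, ε, ρ) = a(θ, u) + ε·b(θ, u) + ε·(ρ·c(θ, u) + h(θ, u, ρ)). Assume a(θ₀, u₀) = 0 and ∇_θa(θ₀, u₀) invertible, and let G be twice continuously differentiable on a neighborhood of (u₀, 0, 0) with G(u₀, 0, 0) = θ₀ and F(G(u, ε, ρ), u, ε, ρ) = 0 there. Define k₀ = −(∇_θa(θ₀, u₀))⁻¹ · c(θ₀, u₀) ∈ ℝ^p. Then for every sequence u_n → u₀, with δ_n = G(u_n, 1/n, 1/n) − G(u_n, 1/n, 0) and δ̂_n = (1/n)·∂G/∂ρ(u_n, 1/n, 0), both n²·δ̂_n → k₀ and n²·δ_n → k₀ as n → ∞. -/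
open Matrix Filter

theorem stmt10_aux (p d : ℕ)
    (θ₀ : Fin p → ℝ) (u₀ : Fin d → ℝ)
    (a b c : (Fin p → ℝ) → (Fin d → ℝ) → (Fin p → ℝ))
    (ha : ContDiff ℝ 2 (fun q : (Fin p → ℝ) × (Fin d → ℝ) => a q.1 q.2))
    (hb : ContDiff ℝ 2 (fun q : (Fin p → ℝ) × (Fin d → ℝ) => b q.1 q.2))
    (hc : ContDiff ℝ 2 (fun q : (Fin p → ℝ) × (Fin d → ℝ) => c q.1 q.2))
    (h : (Fin p → ℝ) → (Fin d → ℝ) → ℝ → (Fin p → ℝ))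
    (hh : ContDiff ℝ 2 (fun q : (Fin p → ℝ) × (Fin d → ℝ) × ℝ => h q.1 q.2.1 q.2.2))
    (hhρ : ∀ θ u, deriv (fun ρ => h θ u ρ) 0 = 0)
    (Ja : Matrix (Fin p) (Fin p) ℝ)
    (hJa : ∀ i j, Ja i j = fderiv ℝ (fun θ => a θ u₀ i) θ₀ (Pi.single j 1))
    (hJaInv : IsUnit Ja.det)
    (G : (Fin d → ℝ) → ℝ → ℝ → (Fin p → ℝ))
    (V : Set ((Fin d → ℝ) × ℝ × ℝ)) (hVopen : IsOpen V)
    (hV : ((u₀, 0, 0) : (Fin d → ℝ) × ℝ × ℝ) ∈ V)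
    (hG : ContDiffOn ℝ 2 (fun q : (Fin d → ℝ) × ℝ × ℝ => G q.1 q.2.1 q.2.2) V)
    (hG0 : G u₀ 0 0 = θ₀)
    (hFG : ∀ q ∈ V, a (G q.1 q.2.1 q.2.2) q.1 + q.2.1 • b (G q.1 q.2.1 q.2.2) q.1
        + q.2.1 • (q.2.2 • c (G q.1 q.2.1 q.2.2) q.1 + h (G q.1 q.2.1 q.2.2) q.1 q.2.2) = 0) :
    ∃ (W : Set ((Fin d → ℝ) × ℝ × ℝ)) (L : ((Fin d → ℝ) × ℝ × ℝ) → (Fin p → ℝ)),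
      IsOpen W ∧ ((u₀, 0, 0) : (Fin d → ℝ) × ℝ × ℝ) ∈ W ∧ ContinuousOn L W ∧
      L (u₀, 0, 0) = -(Ja⁻¹ *ᵥ c θ₀ u₀) ∧
      ∀ q ∈ W, HasDerivAt (fun ρ => G q.1 q.2.1 ρ) (q.2.1 • L q) q.2.2 := by
  classical
  -- the full map Φ
  set Φ : ((Fin p → ℝ) × ((Fin d → ℝ) × ℝ × ℝ)) → (Fin p → ℝ) := fun z =>
    a z.1 z.2.1 + z.2.2.1 • b z.1 z.2.1
      + z.2.2.1 • (z.2.2.2 • c z.1 z.2.1 + h z.1 z.2.1 z.2.2.2) with hΦdef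
  have ha1 : ContDiff ℝ 1 (fun q : (Fin p → ℝ) × (Fin d → ℝ) => a q.1 q.2) :=
    ha.of_le (by norm_num)
  have hb1 : ContDiff ℝ 1 (fun q : (Fin p → ℝ) × (Fin d → ℝ) => b q.1 q.2) :=
    hb.of_le (by norm_num)
  have hc1 : ContDiff ℝ 1 (fun q : (Fin p → ℝ) × (Fin d → ℝ) => c q.1 q.2) :=
    hc.of_le (by norm_num)
  have hh1 : ContDiff ℝ 1 (fun q : (Fin p → ℝ) × (Fin d → ℝ) × ℝ => h q.1 q.2.1 q.2.2) :=
    hh.of_le (by norm_num)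
  have haz : ContDiff ℝ 1 (fun z : (Fin p → ℝ) × ((Fin d → ℝ) × ℝ × ℝ) => a z.1 z.2.1) :=
    ha1.comp (contDiff_fst.prodMk contDiff_snd.fst)
  have hbz : ContDiff ℝ 1 (fun z : (Fin p → ℝ) × ((Fin d → ℝ) × ℝ × ℝ) => b z.1 z.2.1) :=
    hb1.comp (contDiff_fst.prodMk contDiff_snd.fst)
  have hcz : ContDiff ℝ 1 (fun z : (Fin p → ℝ) × ((Fin d → ℝ) × ℝ × ℝ) => c z.1 z.2.1) :=
    hc1.comp (contDiff_fst.prodMk contDiff_snd.fst)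
  have hhz : ContDiff ℝ 1 (fun z : (Fin p → ℝ) × ((Fin d → ℝ) × ℝ × ℝ) => h z.1 z.2.1 z.2.2.2) :=
    hh1.comp (contDiff_fst.prodMk (contDiff_snd.fst.prodMk contDiff_snd.snd.snd))
  have hΦ1 : ContDiff ℝ 1 Φ :=
    (haz.add (contDiff_snd.snd.fst.smul hbz)).add
      (contDiff_snd.snd.fst.smul ((contDiff_snd.snd.snd.smul hcz).add hhz))
  have hΦdiff : ∀ z : (Fin p → ℝ) × ((Fin d → ℝ) × ℝ × ℝ), DifferentiableAt ℝ Φ z :=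
    fun z => (hΦ1.differentiable one_ne_zero) z
  -- differentiability of h in ρ
  have hhd : ∀ (θ : Fin p → ℝ) (uu : Fin d → ℝ) (ρ : ℝ),
      HasDerivAt (fun ρ' => h θ uu ρ') (deriv (fun ρ' => h θ uu ρ') ρ) ρ := by
    intro θ uu ρ
    have : DifferentiableAt ℝ (fun ρ' => h θ uu ρ') ρ := by
      have := ((hh1.differentiable one_ne_zero) (θ, uu, ρ)).comp ρ
        (((differentiableAt_const θ).prodMk
          ((differentiableAt_const uu).prodMk differentiableAt_id)) :
          DifferentiableAt ℝ (fun ρ' : ℝ => ((θ, uu, ρ') : (Fin p → ℝ) × (Fin d → ℝ) × ℝ)) ρ)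
      exact this
    exact this.hasDerivAt
  -- directional derivative in ρ
  have hdir : ∀ z : (Fin p → ℝ) × ((Fin d → ℝ) × ℝ × ℝ), fderiv ℝ Φ z (0, (0, 0, 1)) =
      z.2.2.1 • (c z.1 z.2.1 + deriv (fun ρ => h z.1 z.2.1 ρ) z.2.2.2) := by
    intro z
    obtain ⟨θ, uu, ε, ρ⟩ := z
    have hline : HasDerivAt (fun t : ℝ => ((θ, (uu, ε, ρ + t)) : (Fin p → ℝ) × ((Fin d → ℝ) × ℝ × ℝ))) (0, (0, 0, 1)) 0 := by
      have h1 : HasDerivAt (fun t : ℝ => ρ + t) 1 0 := (hasDerivAt_id 0).const_add ρ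
      exact (hasDerivAt_const 0 θ).prodMk ((hasDerivAt_const 0 uu).prodMk
        ((hasDerivAt_const 0 ε).prodMk h1))
    have h1 : HasDerivAt (fun t => Φ (θ, (uu, ε, ρ + t)))
        (fderiv ℝ Φ (θ, (uu, ε, ρ)) (0, (0, 0, 1))) 0 := by
      have := (hΦdiff (θ, (uu, ε, ρ + 0))).hasFDerivAt.comp_hasDerivAt 0 hline
      simp only [add_zero] at this
      exact this
    have hrc : HasDerivAt (fun t : ℝ => (ρ + t) • c θ uu) (c θ uu) 0 := by
      simpa using (((hasDerivAt_id (0:ℝ)).const_add ρ).smul_const (c θ uu))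
    have hrh : HasDerivAt (fun t : ℝ => h θ uu (ρ + t))
        (deriv (fun ρ' => h θ uu ρ') ρ) 0 := by
      have := (hhd θ uu (ρ + id 0)).scomp 0 ((hasDerivAt_id (0:ℝ)).const_add ρ)
      simp only [id, add_zero, one_smul] at this
      exact this
    have h2 : HasDerivAt (fun t => Φ (θ, (uu, ε, ρ + t)))
        (ε • (c θ uu + deriv (fun ρ' => h θ uu ρ') ρ)) 0 := by
      have := (((hrc.add hrh).const_smul ε).const_add (a θ uu + ε • b θ uu))
      simpa [hΦdef, add_assoc] using this
    exact h1.unique h2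
  -- partial derivative in θ
  set M : ((Fin p → ℝ) × ((Fin d → ℝ) × ℝ × ℝ)) → ((Fin p → ℝ) →L[ℝ] (Fin p → ℝ)) :=
    fun z => (fderiv ℝ Φ z).comp (ContinuousLinearMap.inl ℝ (Fin p → ℝ) ((Fin d → ℝ) × ℝ × ℝ))
    with hMdef
  have hMcont : Continuous M := by
    have h1 : Continuous (fun z => fderiv ℝ Φ z) := hΦ1.continuous_fderiv one_ne_zero
    exact h1.clm_comp continuous_const
  -- value of M at the base point
  set A : (Fin p → ℝ) →L[ℝ] (Fin p → ℝ) := fderiv ℝ (fun θ => a θ u₀) θ₀ with hAdef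
  have haθ : ∀ (uu : Fin d → ℝ) (θ : Fin p → ℝ),
      DifferentiableAt ℝ (fun θ' => a θ' uu) θ := by
    intro uu θ
    exact ((ha1.differentiable one_ne_zero) (θ, uu)).comp θ
      ((differentiableAt_id.prodMk (differentiableAt_const uu)) :
        DifferentiableAt ℝ (fun θ' : Fin p → ℝ => ((θ', uu) : (Fin p → ℝ) × (Fin d → ℝ))) θ)
  have hMz₀ : M (θ₀, (u₀, 0, 0)) = A := by
    have hins : HasFDerivAt
        (fun θ : Fin p → ℝ => ((θ, (u₀, 0, 0)) : (Fin p → ℝ) × ((Fin d → ℝ) × ℝ × ℝ)))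
        (ContinuousLinearMap.inl ℝ (Fin p → ℝ) ((Fin d → ℝ) × ℝ × ℝ)) θ₀ := by
      have : (ContinuousLinearMap.inl ℝ (Fin p → ℝ) ((Fin d → ℝ) × ℝ × ℝ)) =
          (ContinuousLinearMap.id ℝ (Fin p → ℝ)).prod
            (0 : (Fin p → ℝ) →L[ℝ] ((Fin d → ℝ) × ℝ × ℝ)) :=
        ContinuousLinearMap.ext fun x => rfl
      rw [this]
      exact (hasFDerivAt_id θ₀).prodMk (hasFDerivAt_const ((u₀, 0, 0)) θ₀)
    have h1 : HasFDerivAt (fun θ => Φ (θ, (u₀, 0, 0))) (M (θ₀, (u₀, 0, 0))) θ₀ :=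
      by have := (hΦdiff (θ₀, (u₀, 0, 0))).hasFDerivAt.comp θ₀ hins; exact this
    have h2 : (fun θ => Φ (θ, (u₀, 0, 0))) = fun θ => a θ u₀ := by
      funext θ; simp [hΦdef]
    rw [h2] at h1
    exact (h1.fderiv).symm
  -- A corresponds to the matrix Ja
  have hJaA : ∀ x, A x = Ja *ᵥ x := by
    have hsingle : ∀ j, A (Pi.single j 1) = fun i => Ja i j := by
      intro j
      funext i
      have hproj : HasFDerivAt (fun θ => a θ u₀ i)
          ((ContinuousLinearMap.proj i).comp A) θ₀ :=
        (ContinuousLinearMap.proj i :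
          ((Fin p → ℝ) →L[ℝ] ℝ)).hasFDerivAt.comp θ₀ (haθ u₀ θ₀).hasFDerivAt
      rw [hJa i j, hproj.fderiv]
      rfl
    intro x
    have hx : x = ∑ j, x j • (Pi.single j 1 : Fin p → ℝ) := by
      funext i
      simp [Finset.sum_apply, Pi.single_apply]
    conv_lhs => rw [hx]
    rw [map_sum]
    funext i
    simp only [_root_.map_smul, hsingle]
    simp [Matrix.mulVec, Finset.sum_apply, dotProduct, mul_comm]
  -- the inverse CLM via the matrix inverse
  set B : (Fin p → ℝ) →L[ℝ] (Fin p → ℝ) :=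
    LinearMap.toContinuousLinearMap (Matrix.mulVecLin Ja⁻¹) with hBdef
  have hBapp : ∀ x, B x = Ja⁻¹ *ᵥ x := fun x => rfl
  have hAB : ∀ x, A (B x) = x := by
    intro x
    rw [hBapp, hJaA, Matrix.mulVec_mulVec, Matrix.mul_nonsing_inv Ja hJaInv,
      Matrix.one_mulVec]
  have hBA : ∀ x, B (A x) = x := by
    intro x
    rw [hJaA, hBapp, Matrix.mulVec_mulVec, Matrix.nonsing_inv_mul Ja hJaInv,
      Matrix.one_mulVec]
  set uA : ((Fin p → ℝ) →L[ℝ] (Fin p → ℝ))ˣ :=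
    ⟨A, B, ContinuousLinearMap.ext fun x => hAB x, ContinuousLinearMap.ext fun x => hBA x⟩
    with huA
  have hAunit : IsUnit A := ⟨uA, rfl⟩
  have hRingInv : ∀ x, Ring.inverse A x = Ja⁻¹ *ᵥ x := by
    intro x
    have : A = (uA : (Fin p → ℝ) →L[ℝ] (Fin p → ℝ)) := rfl
    rw [this, Ring.inverse_unit]
    exact hBapp x
  -- the implicit map g and the open set W
  set g : ((Fin d → ℝ) × ℝ × ℝ) → (Fin p → ℝ) := fun q => G q.1 q.2.1 q.2.2 with hgdef
  have hgdiff : ∀ q ∈ V, DifferentiableAt ℝ g q := fun q hq =>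
    ((hG.differentiableOn (by norm_num)).differentiableAt (hVopen.mem_nhds hq))
  have hgcont : ContinuousOn g V := hG.continuousOn
  set W : Set ((Fin d → ℝ) × ℝ × ℝ) :=
    V ∩ (fun q => ((g q, q) : (Fin p → ℝ) × ((Fin d → ℝ) × ℝ × ℝ))) ⁻¹'
      {z | IsUnit (M z)} with hWdef
  have hWopen : IsOpen W := by
    refine ContinuousOn.isOpen_inter_preimage ?_ hVopen ?_
    · exact hgcont.prodMk (continuousOn_id)
    · have : {z : (Fin p → ℝ) × ((Fin d → ℝ) × ℝ × ℝ) | IsUnit (M z)}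
          = M ⁻¹' {x | IsUnit x} := rfl
      rw [this]
      exact Units.isOpen.preimage hMcont
  have hWV : W ⊆ V := Set.inter_subset_left
  have hq₀W : ((u₀, 0, 0) : (Fin d → ℝ) × ℝ × ℝ) ∈ W := by
    constructor
    · exact hV
    · show IsUnit (M (g (u₀, 0, 0), (u₀, 0, 0)))
      have : g (u₀, 0, 0) = θ₀ := hG0
      rw [this, hMz₀]
      exact hAunit
  -- the function L
  set L : ((Fin d → ℝ) × ℝ × ℝ) → (Fin p → ℝ) := fun q =>
    -(Ring.inverse (M (g q, q)) (c (g q) q.1 + deriv (fun ρ => h (g q) q.1 ρ) q.2.2))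
    with hLdef
  -- key identity
  have hkey : ∀ q ∈ W, fderiv ℝ g q (0, 0, 1) = q.2.1 • L q := by
    intro q hq
    obtain ⟨hqV, hqU⟩ := hq
    have hunit : IsUnit (M (g q, q)) := hqU
    have hzero : (fun q' => Φ (g q', q')) =ᶠ[nhds q] (fun _ => (0 : Fin p → ℝ)) := by
      filter_upwards [hVopen.mem_nhds hqV] with q' hq'
      exact hFG q' hq'
    have hderiv0 : fderiv ℝ (fun q' => Φ (g q', q')) q = 0 := by
      rw [hzero.fderiv_eq]
      exact fderiv_const_apply 0
    have hcomp : HasFDerivAt (fun q' => Φ (g q', q'))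
        ((fderiv ℝ Φ (g q, q)).comp
          ((fderiv ℝ g q).prod (ContinuousLinearMap.id ℝ ((Fin d → ℝ) × ℝ × ℝ)))) q := by
      have := HasFDerivAt.comp (x := q)
        (f := fun q' : (Fin d → ℝ) × ℝ × ℝ =>
          ((g q', q') : (Fin p → ℝ) × ((Fin d → ℝ) × ℝ × ℝ)))
        (hΦdiff (g q, q)).hasFDerivAt
        ((hgdiff q hqV).hasFDerivAt.prodMk (hasFDerivAt_id q))
      exact this
    have heq0 : (fderiv ℝ Φ (g q, q)).comp
        ((fderiv ℝ g q).prod (ContinuousLinearMap.id ℝ ((Fin d → ℝ) × ℝ × ℝ))) = 0 := by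
      rw [← hcomp.fderiv]; exact hderiv0
    have happ : fderiv ℝ Φ (g q, q) (fderiv ℝ g q (0, 0, 1), ((0, 0, 1) :
        (Fin d → ℝ) × ℝ × ℝ)) = 0 := by
      have := congrArg (fun (T : (((Fin d → ℝ) × ℝ × ℝ)) →L[ℝ] (Fin p → ℝ)) =>
        T ((0, 0, 1) : (Fin d → ℝ) × ℝ × ℝ)) heq0
      simpa using this
    have hsplit : (fderiv ℝ g q (0, 0, 1), ((0, 0, 1) : (Fin d → ℝ) × ℝ × ℝ))
        = ((fderiv ℝ g q (0, 0, 1), (0 : (Fin d → ℝ) × ℝ × ℝ)))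
          + ((0 : Fin p → ℝ), ((0, 0, 1) : (Fin d → ℝ) × ℝ × ℝ)) := by
      simp
    have hMapp : M (g q, q) (fderiv ℝ g q (0, 0, 1))
        = fderiv ℝ Φ (g q, q) (fderiv ℝ g q (0, 0, 1), (0 : (Fin d → ℝ) × ℝ × ℝ)) := rfl
    have hval : M (g q, q) (fderiv ℝ g q (0, 0, 1))
        = -(q.2.1 • (c (g q) q.1 + deriv (fun ρ => h (g q) q.1 ρ) q.2.2)) := by
      rw [hMapp]
      have h1 := hdir (g q, q)
      have h2 : fderiv ℝ Φ (g q, q) (fderiv ℝ g q (0, 0, 1), ((0, 0, 1) :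
          (Fin d → ℝ) × ℝ × ℝ)) = fderiv ℝ Φ (g q, q) (fderiv ℝ g q (0, 0, 1),
            (0 : (Fin d → ℝ) × ℝ × ℝ)) + fderiv ℝ Φ (g q, q)
              ((0 : Fin p → ℝ), ((0, 0, 1) : (Fin d → ℝ) × ℝ × ℝ)) := by
        rw [hsplit, map_add]
      rw [h2, h1] at happ
      exact eq_neg_of_add_eq_zero_left happ
    have hinvMv : ∀ x, Ring.inverse (M (g q, q)) (M (g q, q) x) = x := by
      intro x
      have h1 : Ring.inverse (M (g q, q)) * (M (g q, q)) = 1 :=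
        Ring.inverse_mul_cancel _ hunit
      calc Ring.inverse (M (g q, q)) (M (g q, q) x)
          = (Ring.inverse (M (g q, q)) * (M (g q, q))) x := rfl
        _ = x := by rw [h1]; rfl
    calc fderiv ℝ g q (0, 0, 1)
        = Ring.inverse (M (g q, q)) (M (g q, q) (fderiv ℝ g q (0, 0, 1))) :=
          (hinvMv _).symm
      _ = Ring.inverse (M (g q, q))
          (-(q.2.1 • (c (g q) q.1 + deriv (fun ρ => h (g q) q.1 ρ) q.2.2))) := by rw [hval]
      _ = q.2.1 • L q := by
          rw [map_neg, _root_.map_smul, hLdef]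
          rw [smul_neg]
  -- continuity of the ρ-derivative of h
  have hderh : ∀ w : (Fin p → ℝ) × (Fin d → ℝ) × ℝ,
      deriv (fun ρ => h w.1 w.2.1 ρ) w.2.2
        = fderiv ℝ (fun q : (Fin p → ℝ) × (Fin d → ℝ) × ℝ => h q.1 q.2.1 q.2.2) w
          ((0, 0, 1) : (Fin p → ℝ) × (Fin d → ℝ) × ℝ) := by
    rintro ⟨w1, w2, w3⟩
    have hline : HasDerivAt (fun t : ℝ => ((w1, w2, t) : (Fin p → ℝ) × (Fin d → ℝ) × ℝ))
        (((0, 0, 1) : (Fin p → ℝ) × (Fin d → ℝ) × ℝ)) w3 :=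
      (hasDerivAt_const w3 w1).prodMk ((hasDerivAt_const w3 w2).prodMk (hasDerivAt_id w3))
    have h1 : HasDerivAt (fun ρ => h w1 w2 ρ)
        (fderiv ℝ (fun q : (Fin p → ℝ) × (Fin d → ℝ) × ℝ => h q.1 q.2.1 q.2.2) (w1, w2, w3)
          ((0, 0, 1) : (Fin p → ℝ) × (Fin d → ℝ) × ℝ)) w3 :=
      by have := ((hh1.differentiable one_ne_zero) (w1, w2, w3)).hasFDerivAt.comp_hasDerivAt w3 hline; exact this
    exact h1.deriv
  have hderh_cont : Continuous (fun w : (Fin p → ℝ) × (Fin d → ℝ) × ℝ =>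
      deriv (fun ρ => h w.1 w.2.1 ρ) w.2.2) := by
    have : Continuous (fun w : (Fin p → ℝ) × (Fin d → ℝ) × ℝ =>
        fderiv ℝ (fun q : (Fin p → ℝ) × (Fin d → ℝ) × ℝ => h q.1 q.2.1 q.2.2) w
          ((0, 0, 1) : (Fin p → ℝ) × (Fin d → ℝ) × ℝ)) :=
      (hh1.continuous_fderiv one_ne_zero).clm_apply continuous_const
    exact (continuous_congr hderh).mpr this
  -- continuity of L on W
  have hgW : ContinuousOn g W := hgcont.mono hWV
  have hgqW : ContinuousOn (fun q => ((g q, q) : (Fin p → ℝ) × ((Fin d → ℝ) × ℝ × ℝ))) W :=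
    hgW.prodMk continuousOn_id
  have hLcont : ContinuousOn L W := by
    have hMW : ContinuousOn (fun q => M (g q, q)) W := hMcont.comp_continuousOn hgqW
    have hinvW : ContinuousOn (fun q => Ring.inverse (M (g q, q))) W := by
      intro q hq
      have hunit : IsUnit (M (g q, q)) := hq.2
      obtain ⟨v, hv⟩ := hunit
      have : ContinuousAt Ring.inverse (M (g q, q)) := by
        rw [← hv]; exact NormedRing.inverse_continuousAt v
      exact ContinuousAt.comp_continuousWithinAt (f := fun q => M (g q, q)) this (hMW q hq)
    have hcW : ContinuousOn (fun q => c (g q) q.1 + deriv (fun ρ => h (g q) q.1 ρ) q.2.2) W := by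
      have h1 : ContinuousOn (fun q : (Fin d → ℝ) × ℝ × ℝ => c (g q) q.1) W :=
        (hc1.continuous.comp (continuous_fst.prodMk (continuous_fst.comp continuous_snd))
          : Continuous (fun z : (Fin p → ℝ) × ((Fin d → ℝ) × ℝ × ℝ) =>
            c z.1 z.2.1)).comp_continuousOn hgqW
      have h2 : ContinuousOn (fun q : (Fin d → ℝ) × ℝ × ℝ =>
          deriv (fun ρ => h (g q) q.1 ρ) q.2.2) W := by
        have : Continuous (fun z : (Fin p → ℝ) × ((Fin d → ℝ) × ℝ × ℝ) =>
            deriv (fun ρ => h z.1 z.2.1 ρ) z.2.2.2) :=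
          hderh_cont.comp (continuous_fst.prodMk
            ((continuous_fst.comp continuous_snd).prodMk
              (continuous_snd.comp (continuous_snd.comp continuous_snd))))
        exact this.comp_continuousOn hgqW
      exact h1.add h2
    exact (hinvW.clm_apply hcW).neg
  -- value of L at the base point
  have hLq₀ : L (u₀, 0, 0) = -(Ja⁻¹ *ᵥ c θ₀ u₀) := by
    have hg0 : g (u₀, 0, 0) = θ₀ := hG0
    rw [hLdef]
    simp only [hg0]
    rw [show M (θ₀, ((u₀, 0, 0) : (Fin d → ℝ) × ℝ × ℝ)) = A from hMz₀]
    rw [show deriv (fun ρ => h θ₀ u₀ ρ) (((u₀, 0, 0) : (Fin d → ℝ) × ℝ × ℝ)).2.2 = 0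
      from hhρ θ₀ u₀]
    rw [add_zero, hRingInv]
  -- final derivative statement
  refine ⟨W, L, hWopen, hq₀W, hLcont, hLq₀, ?_⟩
  intro q hq
  obtain ⟨q1, q2, q3⟩ := q
  have hline : HasDerivAt (fun ρ : ℝ => ((q1, q2, ρ) : (Fin d → ℝ) × ℝ × ℝ))
      (((0, 0, 1) : (Fin d → ℝ) × ℝ × ℝ)) q3 :=
    (hasDerivAt_const q3 q1).prodMk ((hasDerivAt_const q3 q2).prodMk (hasDerivAt_id q3))
  have h1 : HasDerivAt (fun ρ => G q1 q2 ρ) (fderiv ℝ g (q1, q2, q3) (0, 0, 1)) q3 :=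
    by have := (hgdiff (q1, q2, q3) (hWV hq)).hasFDerivAt.comp_hasDerivAt q3 hline; exact this
  have h2 := hkey (q1, q2, q3) hq
  rw [h2] at h1
  exact h1
/-- with `k₀ = −(∇_θa(θ₀,u₀))⁻¹ c(θ₀,u₀)`, both `n²·δ̂_n → k₀`
and `n²·δ_n → k₀`. -/
theorem stmt10 (p d : ℕ) (hp : 0 < p) (hd : 0 < d)
    (θ₀ : Fin p → ℝ) (u₀ : Fin d → ℝ)
    (a b c : (Fin p → ℝ) → (Fin d → ℝ) → (Fin p → ℝ))
    (ha : ContDiff ℝ 2 (fun q : (Fin p → ℝ) × (Fin d → ℝ) => a q.1 q.2))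
    (hb : ContDiff ℝ 2 (fun q : (Fin p → ℝ) × (Fin d → ℝ) => b q.1 q.2))
    (hc : ContDiff ℝ 2 (fun q : (Fin p → ℝ) × (Fin d → ℝ) => c q.1 q.2))
    (h : (Fin p → ℝ) → (Fin d → ℝ) → ℝ → (Fin p → ℝ))
    (hh : ContDiff ℝ 2 (fun q : (Fin p → ℝ) × (Fin d → ℝ) × ℝ => h q.1 q.2.1 q.2.2))
    (hh0 : ∀ θ u, h θ u 0 = 0)
    (hhρ : ∀ θ u, deriv (fun ρ => h θ u ρ) 0 = 0)
    (F : (Fin p → ℝ) → (Fin d → ℝ) → ℝ → ℝ → (Fin p → ℝ))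
    (hF : ∀ θ u ε ρ, F θ u ε ρ = a θ u + ε • b θ u + ε • (ρ • c θ u + h θ u ρ))
    (ha0 : a θ₀ u₀ = 0)
    (Ja : Matrix (Fin p) (Fin p) ℝ)
    (hJa : ∀ i j, Ja i j = fderiv ℝ (fun θ => a θ u₀ i) θ₀ (Pi.single j 1))
    (hJaInv : IsUnit Ja.det)
    (G : (Fin d → ℝ) → ℝ → ℝ → (Fin p → ℝ))
    (V : Set ((Fin d → ℝ) × ℝ × ℝ)) (hVopen : IsOpen V)
    (hV : ((u₀, 0, 0) : (Fin d → ℝ) × ℝ × ℝ) ∈ V)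
    (hG : ContDiffOn ℝ 2 (fun q : (Fin d → ℝ) × ℝ × ℝ => G q.1 q.2.1 q.2.2) V)
    (hG0 : G u₀ 0 0 = θ₀)
    (hFG : ∀ q ∈ V, F (G q.1 q.2.1 q.2.2) q.1 q.2.1 q.2.2 = 0)
    (k₀ : Fin p → ℝ) (hk₀ : k₀ = -(Ja⁻¹ *ᵥ c θ₀ u₀))
    (u : ℕ → Fin d → ℝ) (hu : Tendsto u atTop (nhds u₀))
    (δ : ℕ → Fin p → ℝ)
    (hδ : ∀ n : ℕ, δ n = G (u n) ((n:ℝ)⁻¹) ((n:ℝ)⁻¹) - G (u n) ((n:ℝ)⁻¹) 0)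
    (δhat : ℕ → Fin p → ℝ)
    (hδhat : ∀ n : ℕ,
      δhat n = ((n:ℝ)⁻¹) • deriv (fun ρ => G (u n) ((n:ℝ)⁻¹) ρ) 0) :
    Tendsto (fun n : ℕ => ((n:ℝ)^2) • δhat n) atTop (nhds k₀) ∧
    Tendsto (fun n : ℕ => ((n:ℝ)^2) • δ n) atTop (nhds k₀) := by
  obtain ⟨W, L, hWopen, hq₀W, hLcont, hLq₀, hDer⟩ :=
    stmt10_aux p d θ₀ u₀ a b c ha hb hc h hh hhρ Ja hJa hJaInv G V hVopen hV hG hG0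
      (fun q hq => by rw [← hF]; exact hFG q hq)
  have hLk : L (u₀, 0, 0) = k₀ := by rw [hLq₀, hk₀]
  -- the sequence of points
  have hq_seq : Tendsto (fun n : ℕ => ((u n, (n:ℝ)⁻¹, 0) : (Fin d → ℝ) × ℝ × ℝ))
      atTop (nhds ((u₀, 0, 0) : (Fin d → ℝ) × ℝ × ℝ)) :=
    hu.prodMk_nhds (tendsto_inv_atTop_nhds_zero_nat.prodMk_nhds tendsto_const_nhds)
  have hWev : ∀ᶠ n : ℕ in atTop, ((u n, (n:ℝ)⁻¹, 0) : (Fin d → ℝ) × ℝ × ℝ) ∈ W :=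
    hq_seq (hWopen.mem_nhds hq₀W)
  have hLat : ContinuousAt L ((u₀, 0, 0) : (Fin d → ℝ) × ℝ × ℝ) :=
    hLcont.continuousAt (hWopen.mem_nhds hq₀W)
  have limL : Tendsto (fun n : ℕ => L ((u n, (n:ℝ)⁻¹, 0))) atTop (nhds k₀) := by
    have := hLat.tendsto.comp hq_seq
    rwa [hLk] at this
  constructor
  · -- first limit
    refine limL.congr' ?_
    filter_upwards [hWev, eventually_ge_atTop 1] with n hnW hn1
    have hn0 : (n:ℝ) ≠ 0 := by
      have : (1:ℝ) ≤ (n:ℝ) := by exact_mod_cast hn1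
      linarith
    have hder := hDer _ hnW
    have hdval : deriv (fun ρ => G (u n) ((n:ℝ)⁻¹) ρ) 0
        = ((n:ℝ)⁻¹) • L ((u n, (n:ℝ)⁻¹, 0)) := hder.deriv
    rw [hδhat n, hdval, smul_smul, smul_smul]
    rw [show ((n:ℝ)^2 * ((n:ℝ)⁻¹) * ((n:ℝ)⁻¹)) = 1 by field_simp [pow_two]]
    rw [one_smul]
  · -- second limit
    refine Metric.tendsto_nhds.mpr ?_
    intro η hη
    have hev1 : ∀ᶠ q in nhds ((u₀, 0, 0) : (Fin d → ℝ) × ℝ × ℝ), q ∈ W :=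
      hWopen.mem_nhds hq₀W
    have hev2 : ∀ᶠ q in nhds ((u₀, 0, 0) : (Fin d → ℝ) × ℝ × ℝ), ‖L q - k₀‖ < η / 2 := by
      have hball : Metric.ball k₀ (η / 2) ∈ nhds (L ((u₀, 0, 0) :
          (Fin d → ℝ) × ℝ × ℝ)) := by
        rw [hLk]; exact Metric.ball_mem_nhds _ (half_pos hη)
      filter_upwards [hLat.tendsto hball] with q hq
      rw [← dist_eq_norm]; exact hq
    obtain ⟨r, hr0, hball⟩ := Metric.eventually_nhds_iff_ball.mp (hev1.and hev2)
    have hev3 : ∀ᶠ n : ℕ in atTop, dist (u n) u₀ < r := by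
      have := hu (Metric.ball_mem_nhds u₀ hr0)
      filter_upwards [this] with n hn; exact hn
    have hev4 : ∀ᶠ n : ℕ in atTop, (n:ℝ)⁻¹ < r :=
      tendsto_inv_atTop_nhds_zero_nat.eventually_lt_const hr0
    filter_upwards [hev3, hev4, eventually_ge_atTop 1] with n hn_r hn_inv hn1
    rw [dist_eq_norm]
    have hn1' : (1:ℝ) ≤ (n:ℝ) := by exact_mod_cast hn1
    have hn0 : (n:ℝ) ≠ 0 := by linarith
    have hninv_pos : (0:ℝ) < (n:ℝ)⁻¹ := by positivity
    have hmem : ∀ ρ ∈ Set.Icc (0:ℝ) ((n:ℝ)⁻¹),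
        ((u n, (n:ℝ)⁻¹, ρ) : (Fin d → ℝ) × ℝ × ℝ) ∈
          Metric.ball ((u₀, 0, 0) : (Fin d → ℝ) × ℝ × ℝ) r := by
      intro ρ hρ
      obtain ⟨hρ0, hρn⟩ := hρ
      rw [Metric.mem_ball, Prod.dist_eq, Prod.dist_eq]
      have h1 : dist ((n:ℝ)⁻¹) (0:ℝ) < r := by
        rw [Real.dist_eq, sub_zero, abs_of_pos hninv_pos]; exact hn_inv
      have h2 : dist ρ (0:ℝ) < r := by
        rw [Real.dist_eq, sub_zero, abs_of_nonneg hρ0]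
        exact lt_of_le_of_lt hρn hn_inv
      exact max_lt hn_r (max_lt h1 h2)
    -- mean value estimate
    set f : ℝ → (Fin p → ℝ) :=
      fun ρ => G (u n) ((n:ℝ)⁻¹) ρ - ρ • (((n:ℝ)⁻¹) • k₀) with hfdef
    set f' : ℝ → (Fin p → ℝ) :=
      fun ρ => ((n:ℝ)⁻¹) • (L ((u n, (n:ℝ)⁻¹, ρ)) - k₀) with hf'def
    have hfd : ∀ ρ ∈ Set.Icc (0:ℝ) ((n:ℝ)⁻¹),
        HasDerivWithinAt f (f' ρ) (Set.Icc (0:ℝ) ((n:ℝ)⁻¹)) ρ := by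
      intro ρ hρ
      have hqW : ((u n, (n:ℝ)⁻¹, ρ) : (Fin d → ℝ) × ℝ × ℝ) ∈ W :=
        (hball _ (hmem ρ hρ)).1
      have h1 : HasDerivAt (fun ρ' => G (u n) ((n:ℝ)⁻¹) ρ')
          (((n:ℝ)⁻¹) • L ((u n, (n:ℝ)⁻¹, ρ))) ρ := hDer _ hqW
      have h2 : HasDerivAt (fun ρ' : ℝ => ρ' • (((n:ℝ)⁻¹) • k₀))
          (((n:ℝ)⁻¹) • k₀) ρ := by
        simpa using (hasDerivAt_id ρ).smul_const (((n:ℝ)⁻¹) • k₀)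
      have h3 : HasDerivWithinAt f (((n:ℝ)⁻¹) • L ((u n, (n:ℝ)⁻¹, ρ)) - ((n:ℝ)⁻¹) • k₀)
          (Set.Icc (0:ℝ) ((n:ℝ)⁻¹)) ρ := (h1.sub h2).hasDerivWithinAt
      have heq : f' ρ = ((n:ℝ)⁻¹) • L ((u n, (n:ℝ)⁻¹, ρ)) - ((n:ℝ)⁻¹) • k₀ :=
        smul_sub _ _ _
      rw [heq]
      exact h3
    have hbound : ∀ ρ ∈ Set.Icc (0:ℝ) ((n:ℝ)⁻¹), ‖f' ρ‖ ≤ (n:ℝ)⁻¹ * (η / 2) := by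
      intro ρ hρ
      have hqB := (hball _ (hmem ρ hρ)).2
      rw [hf'def]
      rw [norm_smul, Real.norm_eq_abs, abs_of_pos hninv_pos]
      exact mul_le_mul_of_nonneg_left (le_of_lt hqB) (le_of_lt hninv_pos)
    have hmvt := (convex_Icc (0:ℝ) ((n:ℝ)⁻¹)).norm_image_sub_le_of_norm_hasDerivWithin_le
      hfd hbound (Set.left_mem_Icc.mpr (le_of_lt hninv_pos))
      (Set.right_mem_Icc.mpr (le_of_lt hninv_pos))
    -- hmvt : ‖f (n⁻¹) - f 0‖ ≤ (n⁻¹ * (η/2)) * ‖(n:ℝ)⁻¹ - 0‖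
    have hfval : f ((n:ℝ)⁻¹) - f 0 = δ n - (((n:ℝ)⁻¹) * ((n:ℝ)⁻¹)) • k₀ := by
      rw [hfdef, hδ n]
      simp [smul_smul]
      abel
    have hkey2 : ((n:ℝ)^2) • δ n - k₀ = ((n:ℝ)^2) • (δ n - (((n:ℝ)⁻¹) * ((n:ℝ)⁻¹)) • k₀) := by
      rw [smul_sub, smul_smul]
      rw [show ((n:ℝ)^2 * ((n:ℝ)⁻¹ * (n:ℝ)⁻¹)) = 1 by field_simp [pow_two]]
      rw [one_smul]
    rw [hkey2]
    rw [norm_smul, Real.norm_eq_abs, abs_of_pos (by positivity : (0:ℝ) < (n:ℝ)^2)]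
    rw [← hfval]
    calc ((n:ℝ)^2) * ‖f ((n:ℝ)⁻¹) - f 0‖
        ≤ ((n:ℝ)^2) * (((n:ℝ)⁻¹ * (η / 2)) * ‖(n:ℝ)⁻¹ - 0‖) := by
          exact mul_le_mul_of_nonneg_left hmvt (by positivity)
      _ = η / 2 := by
          rw [sub_zero, Real.norm_eq_abs, abs_of_pos hninv_pos]
          field_simp [pow_two]
      _ < η := by linarith
end

section
/- Let p₁, p₂ be positive integers and write points of ℝ^{p₁+p₂} as pairs (v, τ) with v ∈ ℝ^{p₁}, τ ∈ ℝ^{p₂}. Let F = (F_ω, F_τ) : ℝ^{p₁+p₂} × ℝ × ℝ → ℝ^{p₁} × ℝ^{p₂} be continuously differentiable, and let G = (G_v, G_τ) : ℝ × ℝ → ℝ^{p₁} × ℝ^{p₂} be continuously differentiable on a neighborhood of (0, 0) with F(G(ε, ρ); ε, ρ) = 0 there. Suppose there is a neighborhood of ρ = 0 on which, for all such ρ: (i) ∂F_ω/∂ρ(θ; 0, ρ) = 0 for all θ in a neighborhood of G(0, ρ); (ii) the p₁×p₂ block ∇_τF_ω(G(0, ρ); 0, ρ) is the zero matrix; and (iii)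 the p₁×p₁ block ∇_vF_ω(G(0, ρ); 0, ρ) is invertible. Then ∂G_v/∂ρ(0, ρ) = 0 for all ρ in a neighborhood of 0. -/
open Matrix

/-- A continuous linear map on `Fin n → ℝ` is determined by its values on the
standard basis. -/
lemma stmt18_aux_sum {n : ℕ} {E : Type*} [NormedAddCommGroup E] [NormedSpace ℝ E]
    (T : (Fin n → ℝ) →L[ℝ] E) (x : Fin n → ℝ) :
    T x = ∑ j, x j • T (Pi.single j 1) := by
  have hx : x = ∑ j, x j • (Pi.single j 1 : Fin n → ℝ) := by
    conv_lhs => rw [← Finset.univ_sum_single x]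
    refine Finset.sum_congr rfl fun j _ => ?_
    ext k
    by_cases h : k = j <;> simp [Pi.single_apply, h]
  conv_lhs => rw [hx]
  rw [map_sum]
  simp

/-- if along `ε = 0` the `ρ`-derivative of `F_ω` vanishes near
the solution, the mixed block `∇_τF_ω` is zero, and the block `∇_vF_ω` is
invertible, then `∂G_v/∂ρ(0, ρ) = 0` for all `ρ` near `0`. -/
theorem stmt18 (p₁ p₂ : ℕ) (hp₁ : 0 < p₁) (hp₂ : 0 < p₂)
    (F : ((Fin p₁ → ℝ) × (Fin p₂ → ℝ)) → ℝ → ℝ → (Fin p₁ → ℝ) × (Fin p₂ → ℝ))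
    (hF : ContDiff ℝ 1
      (fun q : ((Fin p₁ → ℝ) × (Fin p₂ → ℝ)) × ℝ × ℝ => F q.1 q.2.1 q.2.2))
    (G : ℝ × ℝ → (Fin p₁ → ℝ) × (Fin p₂ → ℝ))
    (V : Set (ℝ × ℝ)) (hVopen : IsOpen V) (hV : ((0:ℝ), (0:ℝ)) ∈ V)
    (hG : ContDiffOn ℝ 1 G V)
    (hFG : ∀ q ∈ V, F (G q) q.1 q.2 = 0)
    (W : Set ℝ) (hW : W ∈ nhds (0:ℝ))
    (hi : ∀ ρ ∈ W, ∀ᶠ θ in nhds (G (0, ρ)), deriv (fun r => (F θ 0 r).1) ρ = 0)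
    (hii : ∀ ρ ∈ W, ∀ (i : Fin p₁) (j : Fin p₂),
      fderiv ℝ (fun τ => (F ((G (0, ρ)).1, τ) 0 ρ).1 i) (G (0, ρ)).2 (Pi.single j 1) = 0)
    (hiii : ∀ ρ ∈ W, IsUnit (Matrix.of fun i j : Fin p₁ =>
      fderiv ℝ (fun w => (F (w, (G (0, ρ)).2) 0 ρ).1 i) (G (0, ρ)).1 (Pi.single j 1)).det) :
    ∀ᶠ ρ in nhds (0:ℝ), deriv (fun r => (G (0, r)).1) ρ = 0 := by
  classical
  set Φ : ((Fin p₁ → ℝ) × (Fin p₂ → ℝ)) × ℝ × ℝ → (Fin p₁ → ℝ) × (Fin p₂ → ℝ) :=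
    fun q => F q.1 q.2.1 q.2.2 with hΦdef
  have hΦd : Differentiable ℝ Φ := hF.differentiable one_ne_zero
  have hUopen : IsOpen {ρ : ℝ | ((0:ℝ), ρ) ∈ V} :=
    hVopen.preimage (by fun_prop : Continuous fun ρ : ℝ => ((0:ℝ), ρ))
  have hU : {ρ : ℝ | ((0:ℝ), ρ) ∈ V} ∈ nhds (0:ℝ) := hUopen.mem_nhds hV
  filter_upwards [hW, hU] with ρ hρW hρV
  set θ₀ := G (0, ρ) with hθ₀
  set L := fderiv ℝ Φ (θ₀, (0, ρ)) with hLdef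
  have hLd : HasFDerivAt Φ L (θ₀, (0, ρ)) := (hΦd _).hasFDerivAt
  -- the curve r ↦ G (0, r) is differentiable at ρ
  have hgd : DifferentiableAt ℝ (fun r : ℝ => G (0, r)) ρ := by
    have h1 : DifferentiableAt ℝ G (0, ρ) :=
      ((hG.differentiableOn one_ne_zero) (0, ρ) hρV).differentiableAt (hVopen.mem_nhds hρV)
    exact h1.comp ρ ((differentiableAt_const _).prodMk differentiableAt_id)
  set g' := deriv (fun r : ℝ => G (0, r)) ρ with hg'def
  have hgD : HasDerivAt (fun r : ℝ => G (0, r)) g' ρ := hgd.hasDerivAt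
  -- the composite r ↦ Φ(G(0,r), (0,r)) has derivative L (g', (0,1)) at ρ
  have hcomp : HasDerivAt (fun r : ℝ => Φ (G (0, r), (0, r))) (L (g', (0, 1))) ρ := by
    have hpair : HasDerivAt (fun r : ℝ => (G (0, r), ((0:ℝ), r)))
        (g', ((0:ℝ), (1:ℝ))) ρ :=
      hgD.prodMk ((hasDerivAt_const ρ (0:ℝ)).prodMk (hasDerivAt_id ρ))
    exact hLd.comp_hasDerivAt ρ hpair
  -- but the composite vanishes near ρ
  have hzero : (fun r : ℝ => Φ (G (0, r), (0, r)))
      =ᶠ[nhds ρ] fun _ => (0 : (Fin p₁ → ℝ) × (Fin p₂ → ℝ)) := by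
    filter_upwards [hUopen.mem_nhds hρV] with r hr
    exact hFG (0, r) hr
  have hLz : L (g', ((0:ℝ), (1:ℝ))) = 0 := by
    rw [← hcomp.deriv, hzero.deriv_eq, deriv_const]
  -- embeddings of the three blocks
  set Jv : (Fin p₁ → ℝ) →L[ℝ] ((Fin p₁ → ℝ) × (Fin p₂ → ℝ)) × ℝ × ℝ :=
    ((ContinuousLinearMap.id ℝ _).prod 0).prod 0 with hJv
  set Jτ : (Fin p₂ → ℝ) →L[ℝ] ((Fin p₁ → ℝ) × (Fin p₂ → ℝ)) × ℝ × ℝ :=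
    ((0 : (Fin p₂ → ℝ) →L[ℝ] (Fin p₁ → ℝ)).prod (ContinuousLinearMap.id ℝ _)).prod 0
    with hJτ
  -- block linear maps (first component of F)
  set S : (Fin p₁ → ℝ) →L[ℝ] (Fin p₁ → ℝ) :=
    (ContinuousLinearMap.fst ℝ _ _).comp (L.comp Jv) with hS
  set T : (Fin p₂ → ℝ) →L[ℝ] (Fin p₁ → ℝ) :=
    (ContinuousLinearMap.fst ℝ _ _).comp (L.comp Jτ) with hT
  -- (c) ρ-partial of F_ω vanishes
  have hρpart : (L (((0:Fin p₁ → ℝ), (0:Fin p₂ → ℝ)), ((0:ℝ), (1:ℝ)))).1 = 0 := by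
    have hpair : HasDerivAt (fun r : ℝ => (θ₀, ((0:ℝ), r)))
        (((0:Fin p₁ → ℝ), (0:Fin p₂ → ℝ)), ((0:ℝ), (1:ℝ))) ρ :=
      (hasDerivAt_const ρ θ₀).prodMk ((hasDerivAt_const ρ (0:ℝ)).prodMk (hasDerivAt_id ρ))
    have hcurve : HasDerivAt (fun r : ℝ => Φ (θ₀, (0, r)))
        (L (((0:Fin p₁ → ℝ), (0:Fin p₂ → ℝ)), ((0:ℝ), (1:ℝ)))) ρ :=
      by have := hLd.comp_hasDerivAt ρ hpair; exact this
    have h1 : HasDerivAt (fun r : ℝ => (Φ (θ₀, (0, r))).1)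
        (L (((0:Fin p₁ → ℝ), (0:Fin p₂ → ℝ)), ((0:ℝ), (1:ℝ)))).1 ρ :=
      (ContinuousLinearMap.fst ℝ (Fin p₁ → ℝ) (Fin p₂ → ℝ)).hasFDerivAt.comp_hasDerivAt
        ρ hcurve
    have h2 := (hi ρ hρW).self_of_nhds
    rw [← h1.deriv]
    exact h2
  -- (b) the τ-block vanishes
  have hτmap : HasFDerivAt (fun τ : Fin p₂ → ℝ => Φ ((θ₀.1, τ), (0, ρ)))
      (L.comp Jτ) θ₀.2 := by
    have hpair : HasFDerivAt (fun τ : Fin p₂ → ℝ => ((θ₀.1, τ), ((0:ℝ), ρ))) Jτ θ₀.2 :=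
      ((hasFDerivAt_const θ₀.1 θ₀.2).prodMk (hasFDerivAt_id θ₀.2)).prodMk
        (hasFDerivAt_const ((0:ℝ), ρ) θ₀.2)
    exact (hΦd _).hasFDerivAt.comp θ₀.2 hpair
  have hτbasis : ∀ j : Fin p₂, T (Pi.single j 1) = 0 := by
    intro j
    funext i
    have hscal : HasFDerivAt (fun τ : Fin p₂ → ℝ => (Φ ((θ₀.1, τ), (0, ρ))).1 i)
        (((ContinuousLinearMap.proj i).comp
          (ContinuousLinearMap.fst ℝ (Fin p₁ → ℝ) (Fin p₂ → ℝ))).comp (L.comp Jτ)) θ₀.2 :=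
      (((ContinuousLinearMap.proj i).comp
          (ContinuousLinearMap.fst ℝ (Fin p₁ → ℝ) (Fin p₂ → ℝ))).hasFDerivAt).comp θ₀.2 hτmap
    have := hii ρ hρW i j
    rw [show (fun τ => (F ((G (0, ρ)).1, τ) 0 ρ).1 i)
        = fun τ : Fin p₂ → ℝ => (Φ ((θ₀.1, τ), (0, ρ))).1 i from rfl,
      hscal.fderiv] at this
    simpa [T, ContinuousLinearMap.comp_apply] using this
  have hτpart : T g'.2 = 0 := by
    rw [stmt18_aux_sum T g'.2]
    simp [hτbasis]
  -- (a) the v-block as a matrix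
  have hvmap : HasFDerivAt (fun w : Fin p₁ → ℝ => Φ ((w, θ₀.2), (0, ρ)))
      (L.comp Jv) θ₀.1 := by
    have hpair : HasFDerivAt (fun w : Fin p₁ → ℝ => ((w, θ₀.2), ((0:ℝ), ρ))) Jv θ₀.1 :=
      ((hasFDerivAt_id θ₀.1).prodMk (hasFDerivAt_const θ₀.2 θ₀.1)).prodMk
        (hasFDerivAt_const ((0:ℝ), ρ) θ₀.1)
    exact (hΦd _).hasFDerivAt.comp θ₀.1 hpair
  set M : Matrix (Fin p₁) (Fin p₁) ℝ := Matrix.of fun i j => S (Pi.single j 1) i with hM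
  have hMfd : ∀ (i j : Fin p₁),
      fderiv ℝ (fun w => (F (w, (G (0, ρ)).2) 0 ρ).1 i) (G (0, ρ)).1 (Pi.single j 1)
        = M i j := by
    intro i j
    have hscal : HasFDerivAt (fun w : Fin p₁ → ℝ => (Φ ((w, θ₀.2), (0, ρ))).1 i)
        (((ContinuousLinearMap.proj i).comp
          (ContinuousLinearMap.fst ℝ (Fin p₁ → ℝ) (Fin p₂ → ℝ))).comp (L.comp Jv)) θ₀.1 :=
      (((ContinuousLinearMap.proj i).comp
          (ContinuousLinearMap.fst ℝ (Fin p₁ → ℝ) (Fin p₂ → ℝ))).hasFDerivAt).comp θ₀.1 hvmap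
    rw [show (fun w => (F (w, (G (0, ρ)).2) 0 ρ).1 i)
        = fun w : Fin p₁ → ℝ => (Φ ((w, θ₀.2), (0, ρ))).1 i from rfl,
      hscal.fderiv]
    simp [M, S, ContinuousLinearMap.comp_apply]
  have hSmul : ∀ x : Fin p₁ → ℝ, S x = M.mulVec x := by
    intro x
    funext i
    rw [stmt18_aux_sum S x]
    simp only [Matrix.mulVec, dotProduct, Finset.sum_apply, Pi.smul_apply,
      smul_eq_mul, hM, Matrix.of_apply]
    exact Finset.sum_congr rfl fun j _ => mul_comm _ _
  -- invertibility
  have hMunit : IsUnit M.det := by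
    have := hiii ρ hρW
    have hMeq : (Matrix.of fun i j : Fin p₁ =>
        fderiv ℝ (fun w => (F (w, (G (0, ρ)).2) 0 ρ).1 i) (G (0, ρ)).1 (Pi.single j 1)) = M := by
      ext i j
      exact hMfd i j
    rwa [hMeq] at this
  have hMinj : Function.Injective M.mulVec :=
    Matrix.mulVec_injective_iff_isUnit.2 ((Matrix.isUnit_iff_isUnit_det M).2 hMunit)
  -- decompose L(g',(0,1))
  have hdecomp : (g', ((0:ℝ), (1:ℝ)))
      = ((g'.1, (0:Fin p₂ → ℝ)), ((0:ℝ), (0:ℝ)))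
        + (((0:Fin p₁ → ℝ), g'.2), ((0:ℝ), (0:ℝ)))
        + (((0:Fin p₁ → ℝ), (0:Fin p₂ → ℝ)), ((0:ℝ), (1:ℝ))) := by
    simp [Prod.ext_iff]
  have hsum : S g'.1 + T g'.2
      + (L (((0:Fin p₁ → ℝ), (0:Fin p₂ → ℝ)), ((0:ℝ), (1:ℝ)))).1 = 0 := by
    have := congrArg Prod.fst hLz
    rw [hdecomp, map_add, map_add] at this
    simpa [S, T, Jv, Jτ, ContinuousLinearMap.comp_apply, Prod.mk_zero_zero] using this
  have hSg : M.mulVec g'.1 = 0 := by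
    rw [← hSmul]
    have : S g'.1 = 0 := by
      have h := hsum
      rw [hτpart, hρpart, add_zero, add_zero] at h
      exact h
    exact this
  have hg1 : g'.1 = 0 := by
    apply hMinj
    rw [hSg, Matrix.mulVec_zero]
  -- conclude
  have hfst : HasDerivAt (fun r : ℝ => (G (0, r)).1) g'.1 ρ :=
    (ContinuousLinearMap.fst ℝ (Fin p₁ → ℝ) (Fin p₂ → ℝ)).hasFDerivAt.comp_hasDerivAt ρ hgD
  rw [hfst.deriv, hg1]
end
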